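/- arXiv:2410.12666 — 9 statements merged into one kernel-verified Lean document; each statement's English description precedes it below -/
import Mathlib

section
/- Let 1 ≤ p < ∞ and let {F₁ < F₂ < ⋯ < F_m} be a chain of maximal Schreier sets (i.e. each Fⱼ is a maximal Schreier set and max Fⱼ < min F_{j+1}). Then the vector x = Σ_{j=1}^m |Fⱼ|^{-1/p} Σ_{k ∈ Fⱼ} e_k satisfies 1 ≤ ‖x‖_{S_p} ≤ 2^{1/p}, where ‖x‖_{S_p} = sup over nonempty Schreier sets F of (Σ_{n∈F} |x(n)|^p)^{1/p}. -/
open Finset Filter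

/-- A Schreier set: a finite set of naturals whose cardinality is at most its minimum
(elements are automatically positive when nonempty). -/
def IsSchreier (F : Finset ℕ) : Prop := ∀ h : F.Nonempty, F.card ≤ F.min' h

/-- A maximal Schreier set: nonempty with cardinality equal to its minimum. -/
def IsMaxSchreier (F : Finset ℕ) : Prop := ∃ h : F.Nonempty, F.card = F.min' h

/-- A (possibly empty) list of nonempty successive Schreier sets. -/
def SchreierChainList (C : List (Finset ℕ)) : Prop :=
  (∀ F ∈ C, IsSchreier F ∧ F.Nonempty) ∧
  C.Chain' (fun F G => ∀ a ∈ F, ∀ b ∈ G, a < b)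

/-- A Schreier chain: a nonempty finite list of nonempty successive Schreier sets. -/
def IsSchreierChain (C : List (Finset ℕ)) : Prop := C ≠ [] ∧ SchreierChainList C

def chainUnion (C : List (Finset ℕ)) : Finset ℕ := C.foldr (· ∪ ·) ∅

noncomputable def mu (p : ℝ) (x : ℕ → ℝ) (F : Finset ℕ) : ℝ :=
  (∑ n ∈ F, |x n| ^ p) ^ (1 / p)

/-- The p-th Schreier norm of a (finitely supported) sequence. -/
noncomputable def schreierNorm (p : ℝ) (x : ℕ → ℝ) : ℝ :=
  sSup {r | ∃ F : Finset ℕ, IsSchreier F ∧ F.Nonempty ∧ r = mu p x F}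

noncomputable def betaNorm (p : ℝ) (x : ℕ → ℝ) (C : List (Finset ℕ)) : ℝ :=
  ((C.map fun F => (∑ n ∈ F, |x n|) ^ p).sum) ^ (1 / p)

/-- The p-th Baernstein norm of a (finitely supported) sequence. -/
noncomputable def baernsteinNorm (p : ℝ) (x : ℕ → ℝ) : ℝ :=
  sSup {r | ∃ C : List (Finset ℕ), IsSchreierChain C ∧ r = betaNorm p x C}

/-- The Schreier covering number of a finite set. -/
noncomputable def tau1 (A : Finset ℕ) : ℕ :=
  sInf {m | ∃ C : List (Finset ℕ), SchreierChainList C ∧ C.length = m ∧ A ⊆ chainUnion C}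

/-- Increasing enumeration of a set of naturals (0-indexed). -/
noncomputable def enumSet (M : Set ℕ) : ℕ → ℕ := Nat.nth (· ∈ M)

/-- `M(J)`: the image of an index set `J` under the increasing enumeration of `M`. -/
noncomputable def subImage (M : Set ℕ) (J : Finset ℕ) : Finset ℕ := J.image (enumSet M)

/-- The Gasparis–Leung index `ΓL₁(M, N) ∈ ℕ ∪ {∞}`. -/
noncomputable def GLindex (M N : Set ℕ) : ℕ∞ :=
  ⨆ J ∈ {J : Finset ℕ | IsSchreier (subImage N J)}, (tau1 (subImage M J) : ℕ∞)

/-- Flat vector with coefficients |F_j|^{-1/p} on the chain of maximal Schreier sets. -/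
noncomputable def flatVecS (p : ℝ) (m : ℕ) (F : Fin m → Finset ℕ) : ℕ → ℝ :=
  fun n => ∑ j : Fin m, if n ∈ F j then (((F j).card : ℝ) ^ (1 / p))⁻¹ else 0

section Aux
variable {p : ℝ} {m : ℕ} {F : Fin m → Finset ℕ}

lemma aux_disj (hsucc : ∀ i j : Fin m, i < j → ∀ a ∈ F i, ∀ b ∈ F j, a < b)
    {i j : Fin m} (hij : i ≠ j) {n : ℕ} (hi : n ∈ F i) (hj : n ∈ F j) : False := by
  rcases lt_or_gt_of_ne hij with h | h
  · exact lt_irrefl n (hsucc i j h n hi n hj)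
  · exact lt_irrefl n (hsucc j i h n hj n hi)

lemma flat_apply (hsucc : ∀ i j : Fin m, i < j → ∀ a ∈ F i, ∀ b ∈ F j, a < b)
    {j : Fin m} {n : ℕ} (hn : n ∈ F j) :
    flatVecS p m F n = (((F j).card : ℝ) ^ (1 / p))⁻¹ := by
  unfold flatVecS
  rw [Finset.sum_eq_single_of_mem j (mem_univ j), if_pos hn]
  intro b _ hb
  rw [if_neg]
  intro hnb
  exact aux_disj hsucc hb hnb hn

lemma flat_pow (hp : 1 ≤ p) (hsucc : ∀ i j : Fin m, i < j → ∀ a ∈ F i, ∀ b ∈ F j, a < b)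
    (hne : ∀ j, (F j).Nonempty) (n : ℕ) :
    |flatVecS p m F n| ^ p = ∑ j : Fin m, if n ∈ F j then (((F j).card : ℝ))⁻¹ else 0 := by
  have hp0 : 0 < p := lt_of_lt_of_le one_pos hp
  by_cases h : ∃ j, n ∈ F j
  · obtain ⟨j, hj⟩ := h
    rw [flat_apply hsucc hj, Finset.sum_eq_single_of_mem j (mem_univ j), if_pos hj]
    · have hc : (0:ℝ) < ((F j).card : ℝ) := by exact_mod_cast (hne j).card_pos
      rw [abs_of_nonneg (by positivity), ← Real.inv_rpow hc.le,
        ← Real.rpow_mul (by positivity), one_div_mul_cancel hp0.ne', Real.rpow_one]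
    · intro b _ hb; rw [if_neg]; intro hnb; exact aux_disj hsucc hb hnb hj
  · push_neg at h
    have hz : flatVecS p m F n = 0 :=
      Finset.sum_eq_zero (fun j _ => if_neg (h j))
    rw [hz, abs_zero, Real.zero_rpow hp0.ne']
    exact (Finset.sum_eq_zero (fun j _ => if_neg (h j))).symm


lemma flat_sum (hp : 1 ≤ p) (hsucc : ∀ i j : Fin m, i < j → ∀ a ∈ F i, ∀ b ∈ F j, a < b)
    (hne : ∀ j, (F j).Nonempty) (G : Finset ℕ) :
    ∑ n ∈ G, |flatVecS p m F n| ^ p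
      = ∑ j : Fin m, ((G ∩ F j).card : ℝ) / ((F j).card : ℝ) := by
  simp_rw [flat_pow hp hsucc hne]
  rw [Finset.sum_comm]
  refine Finset.sum_congr rfl (fun j _ => ?_)
  rw [Finset.sum_ite_mem, Finset.sum_const, nsmul_eq_mul, div_eq_mul_inv]

lemma flat_bound (hp : 1 ≤ p) (hmax : ∀ j, IsMaxSchreier (F j))
    (hsucc : ∀ i j : Fin m, i < j → ∀ a ∈ F i, ∀ b ∈ F j, a < b)
    (G : Finset ℕ) (hG : IsSchreier G) (hGne : G.Nonempty) :
    ∑ n ∈ G, |flatVecS p m F n| ^ p ≤ 2 := by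
  have hne : ∀ j, (F j).Nonempty := fun j => (hmax j).choose
  rw [flat_sum hp hsucc hne]
  set S : Finset (Fin m) := Finset.univ.filter (fun j => (G ∩ F j).Nonempty) with hS
  by_cases hSne : S.Nonempty
  · set j0 := S.min' hSne with hj0def
    have hj0S : j0 ∈ S := S.min'_mem hSne
    have hj0 : (G ∩ F j0).Nonempty := (mem_filter.mp hj0S).2
    obtain ⟨a, ha⟩ := hj0
    have haG : a ∈ G := (mem_inter.mp ha).1
    have haF : a ∈ F j0 := (mem_inter.mp ha).2
    -- bound on other terms
    have hterm : ∀ j ∈ Finset.univ.erase j0,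
        ((G ∩ F j).card : ℝ) / ((F j).card : ℝ)
          ≤ ((G ∩ F j).card : ℝ) / ((G.card : ℝ) + 1) := by
      intro j hj
      have hjne : j ≠ j0 := (mem_erase.mp hj).1
      by_cases hint : (G ∩ F j).Nonempty
      · have hjS : j ∈ S := mem_filter.mpr ⟨mem_univ j, hint⟩
        have hlt : j0 < j := lt_of_le_of_ne (S.min'_le j hjS) (Ne.symm hjne)
        obtain ⟨hFj, hcardFj⟩ := hmax j
        have hminFj : a < (F j).min' hFj :=
          hsucc j0 j hlt a haF _ ((F j).min'_mem hFj)
        have hGa : G.card ≤ a := le_trans (hG hGne) (G.min'_le a haG)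
        have hcard : (G.card : ℝ) + 1 ≤ ((F j).card : ℝ) := by
          have : G.card + 1 ≤ (F j).card := by omega
          exact_mod_cast this
        have h1 : (0:ℝ) < (G.card : ℝ) + 1 := by positivity
        gcongr
      · rw [not_nonempty_iff_eq_empty.mp hint]
        simp
    have hsplit : ∑ j : Fin m, ((G ∩ F j).card : ℝ) / ((F j).card : ℝ)
        = ((G ∩ F j0).card : ℝ) / ((F j0).card : ℝ)
          + ∑ j ∈ Finset.univ.erase j0, ((G ∩ F j).card : ℝ) / ((F j).card : ℝ) :=
      (Finset.add_sum_erase _ _ (mem_univ j0)).symm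
    rw [hsplit]
    have h1 : ((G ∩ F j0).card : ℝ) / ((F j0).card : ℝ) ≤ 1 := by
      apply div_le_one_of_le₀
      · exact_mod_cast Finset.card_le_card (inter_subset_right)
      · exact Nat.cast_nonneg _
    have hcards : ∑ j ∈ Finset.univ.erase j0, ((G ∩ F j).card : ℝ) ≤ (G.card : ℝ) := by
      have : ∑ j ∈ Finset.univ.erase j0, (G ∩ F j).card ≤ G.card := by
        rw [← Finset.card_biUnion (fun i _ j _ hij => Finset.disjoint_left.mpr
          (fun n hni hnj => aux_disj hsucc hij (mem_inter.mp hni).2 (mem_inter.mp hnj).2))]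
        refine Finset.card_le_card (fun n hn => ?_)
        obtain ⟨j, _, hj⟩ := Finset.mem_biUnion.mp hn
        exact (mem_inter.mp hj).1
      exact_mod_cast this
    have h2 : ∑ j ∈ Finset.univ.erase j0, ((G ∩ F j).card : ℝ) / ((F j).card : ℝ) ≤ 1 := by
      calc ∑ j ∈ Finset.univ.erase j0, ((G ∩ F j).card : ℝ) / ((F j).card : ℝ)
          ≤ ∑ j ∈ Finset.univ.erase j0, ((G ∩ F j).card : ℝ) / ((G.card : ℝ) + 1) :=
            Finset.sum_le_sum hterm
        _ = (∑ j ∈ Finset.univ.erase j0, ((G ∩ F j).card : ℝ)) / ((G.card : ℝ) + 1) := by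
            rw [Finset.sum_div]
        _ ≤ (G.card : ℝ) / ((G.card : ℝ) + 1) := by gcongr
        _ ≤ 1 := by
            apply div_le_one_of_le₀ <;> [linarith; positivity]
    linarith
  · rw [Finset.sum_eq_zero]
    · norm_num
    · intro j _
      have : G ∩ F j = ∅ := not_nonempty_iff_eq_empty.mp
        (fun h => hSne ⟨j, mem_filter.mpr ⟨mem_univ j, h⟩⟩)
      simp [this]

end Aux

/-- Norm estimate for flat vectors in the Schreier space S_p. -/
theorem flat_vector_estimate_schreier (p : ℝ) (hp : 1 ≤ p) (m : ℕ) (hm : 1 ≤ m)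
    (F : Fin m → Finset ℕ) (hmax : ∀ j, IsMaxSchreier (F j))
    (hsucc : ∀ i j : Fin m, i < j → ∀ a ∈ F i, ∀ b ∈ F j, a < b) :
    1 ≤ schreierNorm p (flatVecS p m F) ∧
      schreierNorm p (flatVecS p m F) ≤ (2 : ℝ) ^ (1 / p) := by
  have hp0 : 0 < p := lt_of_lt_of_le one_pos hp
  have hne : ∀ j, (F j).Nonempty := fun j => (hmax j).choose
  set j0 : Fin m := ⟨0, by omega⟩ with hj0def
  have hS0 : IsSchreier (F j0) := by
    obtain ⟨h, hc⟩ := hmax j0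
    intro h'
    exact le_of_eq hc
  have hmu1 : mu p (flatVecS p m F) (F j0) = 1 := by
    rw [mu, flat_sum hp hsucc hne]
    rw [Finset.sum_eq_single_of_mem j0 (mem_univ j0)]
    · rw [Finset.inter_self, div_self, Real.one_rpow]
      exact_mod_cast (hne j0).card_pos.ne'
    · intro b _ hb
      have : F j0 ∩ F b = ∅ := not_nonempty_iff_eq_empty.mp (fun hh => by
        obtain ⟨n, hn⟩ := hh
        exact aux_disj hsucc (Ne.symm hb) (mem_inter.mp hn).1 (mem_inter.mp hn).2)
      simp [this]
  have hmem1 : (1:ℝ) ∈ {r | ∃ G : Finset ℕ, IsSchreier G ∧ G.Nonempty ∧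
      r = mu p (flatVecS p m F) G} := ⟨F j0, hS0, hne j0, hmu1.symm⟩
  have hub : ∀ r ∈ {r | ∃ G : Finset ℕ, IsSchreier G ∧ G.Nonempty ∧
      r = mu p (flatVecS p m F) G}, r ≤ (2:ℝ) ^ (1/p) := by
    rintro r ⟨G, hG, hGne, rfl⟩
    rw [mu]
    refine Real.rpow_le_rpow ?_ (flat_bound hp hmax hsucc G hG hGne) (by positivity)
    exact Finset.sum_nonneg fun n _ => Real.rpow_nonneg (abs_nonneg _) p
  constructor
  · exact le_csSup ⟨(2:ℝ) ^ (1/p), hub⟩ hmem1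
  · exact csSup_le ⟨1, hmem1⟩ hub
end

section
/- Let 1 < p < ∞ and let {F₁ < F₂ < ⋯ < F_m} be a chain of maximal Schreier sets. Then the vector x = Σ_{j=1}^m |Fⱼ|^{-1} Σ_{k ∈ Fⱼ} e_k satisfies m^{1/p} ≤ ‖x‖_{B_p} ≤ 2 m^{1/p}, where the Baernstein norm is ‖x‖_{B_p} = sup over Schreier chains C of (Σ_{F∈C} (Σ_{n∈F} |x(n)|)^p)^{1/p}. -/
open Finset Filter

/-- Flat vector with coefficients |F_j|^{-1} on the chain of maximal Schreier sets. -/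
noncomputable def flatVecB (m : ℕ) (F : Fin m → Finset ℕ) : ℕ → ℝ :=
  fun n => ∑ j : Fin m, if n ∈ F j then (((F j).card : ℝ))⁻¹ else 0

lemma flat_nonneg (m : ℕ) (F : Fin m → Finset ℕ) (n : ℕ) : 0 ≤ flatVecB m F n :=
  Finset.sum_nonneg fun j _ => by positivity

lemma flat_abs (m : ℕ) (F : Fin m → Finset ℕ) (n : ℕ) : |flatVecB m F n| = flatVecB m F n :=
  abs_of_nonneg (flat_nonneg m F n)

lemma sumG (m : ℕ) (F : Fin m → Finset ℕ) (G : Finset ℕ) :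
    ∑ n ∈ G, |flatVecB m F n| =
      ∑ j : Fin m, ((G ∩ F j).card : ℝ) / ((F j).card : ℝ) := by
  classical
  simp_rw [flat_abs, flatVecB]
  rw [Finset.sum_comm]
  refine Finset.sum_congr rfl fun j _ => ?_
  rw [Finset.sum_ite_mem, Finset.sum_const, nsmul_eq_mul, div_eq_mul_inv]

lemma pairwise_of_chain (C : List (Finset ℕ)) (hne : ∀ G ∈ C, G.Nonempty)
    (hc : C.Chain' fun F G => ∀ a ∈ F, ∀ b ∈ G, a < b) :
    ∀ i i' : Fin C.length, i < i' → ∀ a ∈ C.get i, ∀ b ∈ C.get i', a < b := by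
  have hadj := List.isChain_iff_getElem.mp hc
  suffices H : ∀ (v : ℕ) (hv : v < C.length) (i : Fin C.length), i.val < v →
      ∀ a ∈ C.get i, ∀ b ∈ C.get ⟨v, hv⟩, a < b by
    intro i i' hlt a ha b hb
    exact H i'.val i'.isLt i hlt a ha b hb
  intro v
  induction v with
  | zero => intro hv i h; exact absurd h (Nat.not_lt_zero _)
  | succ v ih =>
    intro hv i h a ha b hb
    have hv' : v < C.length := Nat.lt_of_succ_lt hv
    rcases Nat.lt_succ_iff_lt_or_eq.mp h with h' | h'
    · obtain ⟨c, hcmem⟩ := hne (C.get ⟨v, hv'⟩) (C.get_mem _)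
      have h1 := ih hv' i h' a ha c hcmem
      have h2 := hadj v (by omega) c hcmem b hb
      omega
    · have : i = ⟨v, hv'⟩ := Fin.ext h'
      rw [this] at ha
      exact hadj v (by omega) a ha b hb


set_option maxHeartbeats 1000000 in
lemma core_bound (p : ℝ) (hp : 1 < p) (m : ℕ) (hm : 1 ≤ m)
    (F : Fin m → Finset ℕ) (hmax : ∀ j, IsMaxSchreier (F j))
    (hsucc : ∀ i j : Fin m, i < j → ∀ a ∈ F i, ∀ b ∈ F j, a < b)
    (k : ℕ) (G : Fin k → Finset ℕ)
    (hGS : ∀ i, IsSchreier (G i)) (hGne : ∀ i, (G i).Nonempty)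
    (hGsucc : ∀ i i' : Fin k, i < i' → ∀ a ∈ G i, ∀ b ∈ G i', a < b) :
    ∑ i : Fin k, (∑ n ∈ G i, |flatVecB m F n|) ^ p ≤ 2 ^ p * m := by
  classical
  have hFne : ∀ j, (F j).Nonempty := fun j => (hmax j).choose
  have hFcard : ∀ j, (F j).card = (F j).min' (hFne j) := fun j => (hmax j).choose_spec
  have hFpos : ∀ j, 0 < (F j).card := fun j => Finset.card_pos.mpr (hFne j)
  have hFdisj : ∀ j j' : Fin m, j ≠ j' → Disjoint (F j) (F j') := by
    intro j j' hjj'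
    rw [Finset.disjoint_left]
    intro n hn hn'
    rcases lt_or_gt_of_ne hjj' with h | h
    · exact lt_irrefl n (hsucc j j' h n hn n hn')
    · exact lt_irrefl n (hsucc j' j h n hn' n hn)
  have hGdisj : ∀ i i' : Fin k, i ≠ i' → Disjoint (G i) (G i') := by
    intro i i' hii'
    rw [Finset.disjoint_left]
    intro n hn hn'
    rcases lt_or_gt_of_ne hii' with h | h
    · exact lt_irrefl n (hGsucc i i' h n hn n hn')
    · exact lt_irrefl n (hGsucc i' i h n hn' n hn)
  set w : Fin k → Fin m → ℝ := fun i j => ((G i ∩ F j).card : ℝ) / ((F j).card : ℝ) with hw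
  have ht : ∀ i, ∑ n ∈ G i, |flatVecB m F n| = ∑ j, w i j := fun i => sumG m F (G i)
  set J : Fin k → Finset (Fin m) := fun i => univ.filter fun j => (G i ∩ F j).Nonempty with hJ
  have hmpos : 0 < m := hm
  set j0 : Fin k → Fin m := fun i =>
    if h : (J i).Nonempty then (J i).min' h else ⟨0, hmpos⟩ with hj0
  set a : Fin k → ℝ := fun i => w i (j0 i) with ha
  set b : Fin k → ℝ := fun i => if 2 ≤ (J i).card then (1 : ℝ) else 0 with hb
  have hw_nonneg : ∀ i j, 0 ≤ w i j := fun i j => by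
    simp only [hw]; positivity
  have hw_le_one : ∀ i j, w i j ≤ 1 := by
    intro i j
    rw [hw, div_le_one (by exact_mod_cast hFpos j)]
    exact_mod_cast Finset.card_le_card Finset.inter_subset_right
  have hw_zero : ∀ i j, j ∉ J i → w i j = 0 := by
    intro i j hj
    simp only [hJ, mem_filter, mem_univ, true_and] at hj
    rw [Finset.not_nonempty_iff_eq_empty] at hj
    simp [hw, hj]
  have hj0mem : ∀ i, (J i).Nonempty → j0 i ∈ J i := by
    intro i h
    simp only [hj0, dif_pos h]
    exact (J i).min'_mem h
  -- cardinality bound for later F's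
  have hbig : ∀ (i : Fin k) (j : Fin m), (J i).Nonempty → j0 i < j →
      (G i).card + 1 ≤ (F j).card := by
    intro i j hne hlt
    have hj0J := hj0mem i hne
    simp only [hJ, mem_filter, mem_univ, true_and] at hj0J
    obtain ⟨n, hn⟩ := hj0J
    rw [Finset.mem_inter] at hn
    have h1 : (G i).card ≤ n := le_trans (hGS i (hGne i)) (Finset.min'_le _ _ hn.1)
    have h2 : n < (F j).min' (hFne j) :=
      hsucc (j0 i) j hlt n hn.2 _ ((F j).min'_mem (hFne j))
    have h3 := hFcard j
    omega
  -- sum of cards of disjoint pieces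
  have hpieceG : ∀ (i : Fin k) (s : Finset (Fin m)),
      ∑ j ∈ s, (G i ∩ F j).card ≤ (G i).card := by
    intro i s
    rw [← Finset.card_biUnion]
    · exact Finset.card_le_card (Finset.biUnion_subset.mpr fun j _ => Finset.inter_subset_left)
    · exact fun j _ j' _ hjj' =>
        Finset.disjoint_of_subset_left Finset.inter_subset_right
          (Finset.disjoint_of_subset_right Finset.inter_subset_right (hFdisj j j' hjj'))
  have hpieceF : ∀ (j : Fin m) (s : Finset (Fin k)),
      ∑ i ∈ s, (G i ∩ F j).card ≤ (F j).card := by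
    intro j s
    rw [← Finset.card_biUnion]
    · exact Finset.card_le_card (Finset.biUnion_subset.mpr fun i _ => Finset.inter_subset_right)
    · exact fun i _ i' _ hii' =>
        Finset.disjoint_of_subset_left Finset.inter_subset_left
          (Finset.disjoint_of_subset_right Finset.inter_subset_left (hGdisj i i' hii'))
  -- Claim A : t i ≤ a i + b i
  have hA : ∀ i, ∑ j, w i j ≤ a i + b i := by
    intro i
    rw [← Finset.add_sum_erase univ (w i) (mem_univ (j0 i))]
    refine add_le_add_right ?_ (a i)
    by_cases h2 : 2 ≤ (J i).card
    · have hne : (J i).Nonempty := Finset.card_pos.mp (by omega)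
      have hbi : b i = 1 := by simp [hb, h2]
      rw [hbi]
      set g : ℕ := (G i).card with hg
      calc ∑ j ∈ univ.erase (j0 i), w i j
          ≤ ∑ j ∈ univ.erase (j0 i), ((G i ∩ F j).card : ℝ) / (g + 1) := by
            refine Finset.sum_le_sum fun j hj => ?_
            by_cases hcase : (G i ∩ F j).Nonempty
            · have hjJ : j ∈ J i := by simp [hJ, hcase]
              have hjne : j ≠ j0 i := (Finset.mem_erase.mp hj).1
              have hlt : j0 i < j := by
                refine lt_of_le_of_ne ?_ (Ne.symm hjne)
                simp only [hj0, dif_pos hne]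
                exact Finset.min'_le _ _ hjJ
              have hcard := hbig i j hne hlt
              rw [hw]
              refine div_le_div_of_nonneg_left (by positivity) (by positivity) ?_
              have : (g : ℝ) + 1 ≤ ((F j).card : ℝ) := by exact_mod_cast hcard
              exact this
            · rw [Finset.not_nonempty_iff_eq_empty] at hcase
              simp [hw, hcase]
        _ = (∑ j ∈ univ.erase (j0 i), ((G i ∩ F j).card : ℝ)) / (g + 1) := by
            rw [Finset.sum_div]
        _ ≤ (g : ℝ) / (g + 1) := by
            rw [div_le_div_iff_of_pos_right (by positivity)]
            exact_mod_cast hpieceG i _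
        _ ≤ 1 := by
            rw [div_le_one (by positivity)]
            linarith
    · have hbi : b i = 0 := by simp [hb, h2]
      rw [hbi]
      refine le_of_eq (Finset.sum_eq_zero fun j hj => ?_)
      refine hw_zero i j fun hjJ => ?_
      have hjne : j ≠ j0 i := (Finset.mem_erase.mp hj).1
      have hne : (J i).Nonempty := ⟨j, hjJ⟩
      have : 2 ≤ (J i).card := by
        have := Finset.one_lt_card.mpr ⟨j, hjJ, j0 i, hj0mem i hne, hjne⟩
        omega
      exact h2 this
  have hB : ∑ i, a i ≤ (m : ℝ) := by
    rw [← Finset.sum_fiberwise univ j0 a]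
    have hinner : ∀ j : Fin m, (∑ i ∈ univ.filter fun i => j0 i = j, a i) ≤ 1 := by
      intro j
      have hcongr : ∀ i ∈ univ.filter fun i => j0 i = j, a i = w i j := fun i hi => by
        rw [ha]; exact congrArg (w i) (Finset.mem_filter.mp hi).2
      rw [Finset.sum_congr rfl hcongr]
      have : ∀ i ∈ univ.filter fun i => j0 i = j, w i j
          = ((G i ∩ F j).card : ℝ) / ((F j).card : ℝ) := fun i _ => rfl
      rw [Finset.sum_congr rfl this, ← Finset.sum_div,
        div_le_one (by exact_mod_cast hFpos j)]
      exact_mod_cast hpieceF j _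
    calc ∑ j : Fin m, ∑ i ∈ univ.filter fun i => j0 i = j, a i
        ≤ ∑ _j : Fin m, (1 : ℝ) := Finset.sum_le_sum fun j _ => hinner j
      _ = (m : ℝ) := by simp
  -- Claim C : ∑ b ≤ m
  have hCle : ∑ i, b i ≤ (m : ℝ) := by
    have hcalc : ∑ i, b i = ((univ.filter fun i => 2 ≤ (J i).card).card : ℝ) := by
      rw [show ∑ i, b i = ∑ i ∈ (univ : Finset (Fin k)),
          (if 2 ≤ (J i).card then (1 : ℝ) else 0) from rfl,
        ← Finset.sum_filter, Finset.sum_const, nsmul_eq_mul, mul_one]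
    rw [hcalc]
    have hcard : (univ.filter fun i => 2 ≤ (J i).card).card ≤ m := by
      have := Finset.card_le_card_of_injOn j0
        (fun i _ => Finset.mem_univ (j0 i) : ∀ i ∈ univ.filter fun i => 2 ≤ (J i).card,
          j0 i ∈ (univ : Finset (Fin m))) ?_
      · simpa using this
      · intro i hi i' hi' heq
        simp only [Finset.coe_filter, Set.mem_setOf_eq, mem_univ, true_and] at hi hi'
        by_contra hne
        have key : ∀ u u' : Fin k, u < u' → 2 ≤ (J u).card → 2 ≤ (J u').card →
            j0 u = j0 u' → False := by
          intro u u' hlt h2u h2u' hj0eq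
          have hJu : (J u).Nonempty := Finset.card_pos.mp (by omega)
          have hJu' : (J u').Nonempty := Finset.card_pos.mp (by omega)
          obtain ⟨j1, hj1J, hj1ne⟩ := Finset.exists_mem_ne (s := J u) (by omega) (j0 u)
          have hjlt : j0 u < j1 := by
            refine lt_of_le_of_ne ?_ (Ne.symm hj1ne)
            have := hj0mem u hJu
            simp only [hj0, dif_pos hJu]
            exact Finset.min'_le _ _ hj1J
          simp only [hJ, mem_filter, mem_univ, true_and] at hj1J
          obtain ⟨n1, hn1⟩ := hj1J
          rw [Finset.mem_inter] at hn1
          have hj0u' := hj0mem u' hJu'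
          rw [← hj0eq] at hj0u'
          simp only [hJ, mem_filter, mem_univ, true_and] at hj0u'
          obtain ⟨n, hn⟩ := hj0u'
          rw [Finset.mem_inter] at hn
          have h1 : n < n1 := hsucc (j0 u) j1 hjlt n hn.2 n1 hn1.2
          have h2 : n1 < n := hGsucc u u' hlt n1 hn1.1 n hn.1
          omega
        rcases lt_or_gt_of_ne hne with h | h
        · exact key i i' h hi hi' heq
        · exact key i' i h hi' hi heq.symm
    exact_mod_cast hcard
  -- term bound : t^p ≤ 2^(p-1) t
  have htb2 : ∀ i, ∑ j, w i j ≤ 2 := by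
    intro i
    refine le_trans (hA i) ?_
    have h1 : a i ≤ 1 := hw_le_one i (j0 i)
    have h2 : b i ≤ 1 := by simp only [hb]; split <;> norm_num
    linarith
  have hterm : ∀ i, (∑ j, w i j) ^ p ≤ 2 ^ (p - 1) * (∑ j, w i j) := by
    intro i
    set t : ℝ := ∑ j, w i j with htdef
    have ht0 : 0 ≤ t := Finset.sum_nonneg fun j _ => hw_nonneg i j
    rcases eq_or_lt_of_le ht0 with h0 | h0
    · rw [← h0, Real.zero_rpow (by linarith), mul_zero]
    · have hmul : t ^ (p - 1) * t = t ^ p := by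
        rw [← Real.rpow_add_one (ne_of_gt h0) (p - 1)]
        congr 1
        ring
      rw [← hmul]
      have hle : t ^ (p - 1) ≤ 2 ^ (p - 1) :=
        Real.rpow_le_rpow ht0 (htb2 i) (by linarith)
      exact mul_le_mul_of_nonneg_right hle ht0
  calc ∑ i : Fin k, (∑ n ∈ G i, |flatVecB m F n|) ^ p
      = ∑ i : Fin k, (∑ j, w i j) ^ p := by
        refine Finset.sum_congr rfl fun i _ => ?_
        rw [ht i]
    _ ≤ ∑ i : Fin k, 2 ^ (p - 1) * (∑ j, w i j) :=
        Finset.sum_le_sum fun i _ => hterm i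
    _ = 2 ^ (p - 1) * ∑ i : Fin k, ∑ j, w i j := by rw [← Finset.mul_sum]
    _ ≤ 2 ^ (p - 1) * ∑ i : Fin k, (a i + b i) := by
        refine mul_le_mul_of_nonneg_left (Finset.sum_le_sum fun i _ => hA i) ?_
        positivity
    _ ≤ 2 ^ (p - 1) * ((m : ℝ) + m) := by
        refine mul_le_mul_of_nonneg_left ?_ (by positivity)
        rw [Finset.sum_add_distrib]
        exact add_le_add hB hCle
    _ = 2 ^ p * m := by
        rw [show (m : ℝ) + m = 2 * m by ring, ← mul_assoc]
        congr 1
        rw [← Real.rpow_add_one (by norm_num : (2 : ℝ) ≠ 0) (p - 1)]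
        congr 1
        ring

lemma chain_sum_bound (p : ℝ) (hp : 1 < p) (m : ℕ) (hm : 1 ≤ m)
    (F : Fin m → Finset ℕ) (hmax : ∀ j, IsMaxSchreier (F j))
    (hsucc : ∀ i j : Fin m, i < j → ∀ a ∈ F i, ∀ b ∈ F j, a < b)
    (C : List (Finset ℕ)) (hC : SchreierChainList C) :
    (C.map fun G => (∑ n ∈ G, |flatVecB m F n|) ^ p).sum ≤ 2 ^ p * m := by
  obtain ⟨hmem, hchain⟩ := hC
  have hlist : C.map (fun G => (∑ n ∈ G, |flatVecB m F n|) ^ p)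
      = List.ofFn fun i : Fin C.length => (∑ n ∈ C.get i, |flatVecB m F n|) ^ p := by
    conv_lhs => rw [← List.ofFn_get C]
    rw [List.map_ofFn]
    rfl
  rw [hlist, Fin.sum_ofFn]
  exact core_bound p hp m hm F hmax hsucc C.length C.get
    (fun i => (hmem _ (C.get_mem i)).1)
    (fun i => (hmem _ (C.get_mem i)).2)
    (pairwise_of_chain C (fun G hG => (hmem G hG).2) hchain)

lemma beta_le (p : ℝ) (hp : 1 < p) (m : ℕ) (hm : 1 ≤ m)
    (F : Fin m → Finset ℕ) (hmax : ∀ j, IsMaxSchreier (F j))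
    (hsucc : ∀ i j : Fin m, i < j → ∀ a ∈ F i, ∀ b ∈ F j, a < b)
    (C : List (Finset ℕ)) (hC : IsSchreierChain C) :
    betaNorm p (flatVecB m F) C ≤ 2 * (m : ℝ) ^ (1 / p) := by
  have hsum := chain_sum_bound p hp m hm F hmax hsucc C hC.2
  have h0 : (0 : ℝ) ≤ (C.map fun G => (∑ n ∈ G, |flatVecB m F n|) ^ p).sum := by
    apply List.sum_nonneg
    intro y hy
    rw [List.mem_map] at hy
    obtain ⟨G, _, rfl⟩ := hy
    exact Real.rpow_nonneg (Finset.sum_nonneg fun n _ => abs_nonneg _) p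
  rw [betaNorm]
  calc ((C.map fun G => (∑ n ∈ G, |flatVecB m F n|) ^ p).sum) ^ (1 / p)
      ≤ ((2 : ℝ) ^ p * m) ^ (1 / p) := Real.rpow_le_rpow h0 hsum (by positivity)
    _ = 2 * (m : ℝ) ^ (1 / p) := by
        rw [Real.mul_rpow (by positivity) (Nat.cast_nonneg m)]
        congr 1
        rw [← Real.rpow_mul (by norm_num : (0 : ℝ) ≤ 2),
          mul_one_div_cancel (by linarith : p ≠ 0), Real.rpow_one]

lemma sumFj (m : ℕ) (F : Fin m → Finset ℕ) (hFne : ∀ j, (F j).Nonempty)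
    (hFdisj : ∀ j j' : Fin m, j ≠ j' → Disjoint (F j) (F j')) (j : Fin m) :
    ∑ n ∈ F j, |flatVecB m F n| = 1 := by
  rw [sumG]
  rw [Finset.sum_eq_single j]
  · rw [Finset.inter_self, div_self]
    exact_mod_cast (Finset.card_pos.mpr (hFne j)).ne'
  · intro j' _ hj'
    have : F j ∩ F j' = ∅ :=
      Finset.disjoint_iff_inter_eq_empty.mp (hFdisj j j' fun h => hj' h.symm)
    simp [this]
  · intro h
    exact absurd (Finset.mem_univ j) h

/-- Norm estimate for flat vectors in the Baernstein space B_p. -/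
theorem flat_vector_estimate_baernstein (p : ℝ) (hp : 1 < p) (m : ℕ) (hm : 1 ≤ m)
    (F : Fin m → Finset ℕ) (hmax : ∀ j, IsMaxSchreier (F j))
    (hsucc : ∀ i j : Fin m, i < j → ∀ a ∈ F i, ∀ b ∈ F j, a < b) :
    (m : ℝ) ^ (1 / p) ≤ baernsteinNorm p (flatVecB m F) ∧
      baernsteinNorm p (flatVecB m F) ≤ 2 * (m : ℝ) ^ (1 / p) := by
  have hFne : ∀ j, (F j).Nonempty := fun j => (hmax j).choose
  have hFdisj : ∀ j j' : Fin m, j ≠ j' → Disjoint (F j) (F j') := by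
    intro j j' hjj'
    rw [Finset.disjoint_left]
    intro n hn hn'
    rcases lt_or_gt_of_ne hjj' with h | h
    · exact lt_irrefl n (hsucc j j' h n hn n hn')
    · exact lt_irrefl n (hsucc j' j h n hn' n hn)
  have hone : ∀ j, ∑ n ∈ F j, |flatVecB m F n| = 1 := sumFj m F hFne hFdisj
  have hupper_all : ∀ C, IsSchreierChain C →
      betaNorm p (flatVecB m F) C ≤ 2 * (m : ℝ) ^ (1 / p) :=
    beta_le p hp m hm F hmax hsucc
  have hbdd : BddAbove {r | ∃ C : List (Finset ℕ),
      IsSchreierChain C ∧ r = betaNorm p (flatVecB m F) C} := by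
    refine ⟨2 * (m : ℝ) ^ (1 / p), ?_⟩
    rintro r ⟨C, hC, rfl⟩
    exact hupper_all C hC
  constructor
  · have hchain : IsSchreierChain (List.ofFn F) := by
      refine ⟨?_, ?_, ?_⟩
      · intro h
        have := congrArg List.length h
        simp only [List.length_ofFn, List.length_nil] at this
        omega
      · intro G hG
        rw [List.mem_ofFn] at hG
        obtain ⟨j, rfl⟩ := hG
        obtain ⟨hne, hcard⟩ := hmax j
        exact ⟨fun h' => le_of_eq hcard, hne⟩
      · rw [List.Chain', List.isChain_iff_getElem]
        intro i hi
        intro a ha b hb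
        rw [List.getElem_ofFn] at ha hb
        refine hsucc _ _ ?_ a ha b hb
        simp [Fin.lt_def]
    have hval : betaNorm p (flatVecB m F) (List.ofFn F) = (m : ℝ) ^ (1 / p) := by
      rw [betaNorm, List.map_ofFn, Fin.sum_ofFn]
      have h1 : ∀ j : Fin m,
          ((fun G => (∑ n ∈ G, |flatVecB m F n|) ^ p) ∘ F) j = 1 := by
        intro j
        simp only [Function.comp_apply]
        rw [hone j, Real.one_rpow]
      rw [Finset.sum_congr rfl fun j _ => h1 j, Finset.sum_const]
      simp
    exact le_csSup hbdd ⟨List.ofFn F, hchain, hval.symm⟩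
  · refine Real.sSup_le ?_ (by positivity)
    rintro r ⟨C, hC, rfl⟩
    exact hupper_all C hC
end

section
/- Let 1 < p < ∞, and suppose x is a finitely supported nonnegative real sequence whose nonzero coordinates are decreasing. Then x attains its Baernstein norm at some Schreier chain covering its support: there is a Schreier chain C with ⋃C = supp(x) and ‖x‖_{B_p} = β_p(x, C). -/
open Finset Filter

namespace BAux

def Rlt (F G : Finset ℕ) : Prop := ∀ a ∈ F, ∀ b ∈ G, a < b

lemma chainUnion_nil : chainUnion [] = ∅ := rfl
lemma chainUnion_cons (F : Finset ℕ) (t : List (Finset ℕ)) :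
    chainUnion (F :: t) = F ∪ chainUnion t := rfl

lemma mem_chainUnion {a : ℕ} : ∀ {C : List (Finset ℕ)}, a ∈ chainUnion C ↔ ∃ F ∈ C, a ∈ F := by
  intro C
  induction C with
  | nil => simp [chainUnion_nil]
  | cons F t ih => simp [chainUnion_cons, ih]

lemma isSchreier_singleton {n : ℕ} (hn : 1 ≤ n) : IsSchreier {n} := by
  intro h; simp [hn]

noncomputable def gsum (p : ℝ) (x : ℕ → ℝ) (C : List (Finset ℕ)) : ℝ :=
  (C.map fun F => (∑ n ∈ F, |x n|) ^ p).sum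

lemma gsum_nil (p : ℝ) (x : ℕ → ℝ) : gsum p x [] = 0 := rfl

lemma gsum_cons (p : ℝ) (x : ℕ → ℝ) (F : Finset ℕ) (t : List (Finset ℕ)) :
    gsum p x (F :: t) = (∑ n ∈ F, |x n|) ^ p + gsum p x t := rfl

def insertBlock (n : ℕ) : List (Finset ℕ) → List (Finset ℕ)
  | [] => [{n}]
  | F :: t =>
    if ∀ a ∈ F, n < a then {n} :: F :: t
    else if ∀ a ∈ F, a < n then F :: insertBlock n t
    else if ∀ a ∈ F, F.card < a then insert n F :: t
    else insert n (F.erase (F.max.unbotD 0)) :: t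

lemma insertBlock_spec (p : ℝ) (hp0 : 0 ≤ p) (x : ℕ → ℝ) (S : Finset ℕ)
    (habs : ∀ m k : ℕ, m < k → m ∈ S → k ∈ S → |x k| ≤ |x m|)
    (hS0 : 0 ∉ S) (n : ℕ) (hn : n ∈ S) :
    ∀ C : List (Finset ℕ), (∀ F ∈ C, IsSchreier F ∧ F.Nonempty ∧ F ⊆ S) →
    C.Pairwise Rlt → n ∉ chainUnion C →
    insertBlock n C ≠ [] ∧
    (∀ F ∈ insertBlock n C, IsSchreier F ∧ F.Nonempty ∧ F ⊆ S) ∧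
    (insertBlock n C).Pairwise Rlt ∧
    (chainUnion (insertBlock n C) = insert n (chainUnion C) ∨
      ∃ m ∈ chainUnion C, n < m ∧
        chainUnion (insertBlock n C) = insert n ((chainUnion C).erase m)) ∧
    gsum p x C ≤ gsum p x (insertBlock n C) := by
  have hn1 : 1 ≤ n := by
    rcases Nat.eq_zero_or_pos n with rfl | h
    · exact absurd hn hS0
    · exact h
  intro C
  induction C with
  | nil =>
    intro _ _ _
    refine ⟨by simp [insertBlock], ?_, ?_, ?_, ?_⟩
    · intro F hF
      simp only [insertBlock, List.mem_singleton] at hF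
      subst hF
      exact ⟨isSchreier_singleton hn1, Finset.singleton_nonempty n, by simpa using hn⟩
    · simp [insertBlock]
    · left
      simp [insertBlock, chainUnion_cons, chainUnion_nil]
    · show gsum p x [] ≤ gsum p x [{n}]
      rw [gsum_nil, gsum_cons, gsum_nil]
      have : (0:ℝ) ≤ (∑ k ∈ ({n} : Finset ℕ), |x k|) ^ p :=
        Real.rpow_nonneg (Finset.sum_nonneg fun i _ => abs_nonneg _) _
      linarith
  | cons F t ih =>
    intro hmem hpw hnU
    obtain ⟨hFS, hFne, hFsub⟩ := hmem F (by simp)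
    have hnF : n ∉ F := fun h => hnU (by rw [chainUnion_cons]; exact Finset.mem_union_left _ h)
    have hnUt : n ∉ chainUnion t := fun h =>
      hnU (by rw [chainUnion_cons]; exact Finset.mem_union_right _ h)
    have hpw1 : ∀ G ∈ t, Rlt F G := (List.pairwise_cons.1 hpw).1
    have hpwt : t.Pairwise Rlt := (List.pairwise_cons.1 hpw).2
    have hmemt : ∀ G ∈ t, IsSchreier G ∧ G.Nonempty ∧ G ⊆ S :=
      fun G hG => hmem G (List.mem_cons_of_mem _ hG)
    simp only [insertBlock]
    split_ifs with h1 h2 h3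
    · -- n before F : {n} :: F :: t
      refine ⟨by simp, ?_, ?_, ?_, ?_⟩
      · intro G hG
        rcases List.mem_cons.1 hG with rfl | hG'
        · exact ⟨isSchreier_singleton hn1, Finset.singleton_nonempty n, by simpa using hn⟩
        · exact hmem G hG'
      · refine List.Pairwise.cons ?_ hpw
        intro G hG a ha b hb
        rw [Finset.mem_singleton] at ha
        subst ha
        rcases List.mem_cons.1 hG with rfl | hG'
        · exact h1 b hb
        · obtain ⟨c, hc⟩ := hFne
          exact lt_trans (h1 c hc) (hpw1 G hG' c hc b hb)
      · left
        rw [chainUnion_cons, Finset.insert_eq]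
      · rw [gsum_cons p x {n} (F :: t)]
        have : (0:ℝ) ≤ (∑ k ∈ ({n} : Finset ℕ), |x k|) ^ p :=
          Real.rpow_nonneg (Finset.sum_nonneg fun i _ => abs_nonneg _) _
        linarith
    · -- n after F : F :: insertBlock n t
      obtain ⟨hne', hmem', hpw', hun', hg'⟩ := ih hmemt hpwt hnUt
      have hbU : ∀ b ∈ chainUnion (insertBlock n t), b = n ∨ b ∈ chainUnion t := by
        intro b hb
        rcases hun' with h | ⟨m, hm, _, h⟩
        · rw [h, Finset.mem_insert] at hb
          exact hb.imp id id
        · rw [h, Finset.mem_insert] at hb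
          exact hb.imp id (fun hb' => Finset.erase_subset _ _ hb')
      refine ⟨by simp, ?_, ?_, ?_, ?_⟩
      · intro G hG
        rcases List.mem_cons.1 hG with rfl | hG'
        · exact ⟨hFS, hFne, hFsub⟩
        · exact hmem' G hG'
      · refine List.Pairwise.cons ?_ hpw'
        intro G hG a ha b hb
        have hb' : b ∈ chainUnion (insertBlock n t) := mem_chainUnion.2 ⟨G, hG, hb⟩
        rcases hbU b hb' with rfl | hb''
        · exact h2 a ha
        · obtain ⟨G', hG', hbG'⟩ := mem_chainUnion.1 hb''
          exact hpw1 G' hG' a ha b hbG'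
      · rcases hun' with h | ⟨m, hm, hnm, h⟩
        · left
          rw [chainUnion_cons, chainUnion_cons, h, Finset.union_insert]
        · right
          have hmF : m ∉ F := by
            intro hmF
            obtain ⟨G', hG', hmG'⟩ := mem_chainUnion.1 hm
            exact lt_irrefl m (hpw1 G' hG' m hmF m hmG')
          refine ⟨m, by rw [chainUnion_cons]; exact Finset.mem_union_right _ hm, hnm, ?_⟩
          rw [chainUnion_cons, chainUnion_cons, h, Finset.union_insert,
            Finset.erase_union_distrib, Finset.erase_eq_of_notMem hmF]
      · rw [gsum_cons, gsum_cons]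
        linarith
    · -- straddle, room to add n to F
      have hstr1 : ∃ a ∈ F, a < n := by
        push_neg at h1
        obtain ⟨a, haF, ha⟩ := h1
        exact ⟨a, haF, lt_of_le_of_ne ha (fun h => hnF (h ▸ haF))⟩
      have hstr2 : ∃ b ∈ F, n < b := by
        push_neg at h2
        obtain ⟨b, hbF, hb⟩ := h2
        exact ⟨b, hbF, lt_of_le_of_ne hb (fun h => hnF (h ▸ hbF))⟩
      obtain ⟨a0, ha0F, ha0⟩ := hstr1
      obtain ⟨b0, hb0F, hb0⟩ := hstr2
      refine ⟨by simp, ?_, ?_, ?_, ?_⟩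
      · intro G hG
        rcases List.mem_cons.1 hG with rfl | hG'
        · refine ⟨?_, Finset.insert_nonempty _ _, Finset.insert_subset hn hFsub⟩
          intro hne
          apply Finset.le_min'
          intro y hy
          rw [Finset.card_insert_of_notMem hnF]
          rcases Finset.mem_insert.1 hy with rfl | hyF
          · have := h3 a0 ha0F
            omega
          · have := h3 y hyF
            omega
        · exact hmemt G hG'
      · refine List.Pairwise.cons ?_ hpwt
        intro G hG a ha b hb
        rcases Finset.mem_insert.1 ha with rfl | haF
        · exact lt_trans hb0 (hpw1 G hG b0 hb0F b hb)
        · exact hpw1 G hG a haF b hb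
      · left
        rw [chainUnion_cons, chainUnion_cons, Finset.insert_union]
      · rw [gsum_cons, gsum_cons]
        have hterm : (∑ k ∈ F, |x k|) ^ p ≤ (∑ k ∈ insert n F, |x k|) ^ p := by
          apply Real.rpow_le_rpow (Finset.sum_nonneg fun i _ => abs_nonneg _) _ hp0
          rw [Finset.sum_insert hnF]
          have := abs_nonneg (x n)
          linarith
        linarith
    · -- straddle, swap max F for n
      have hstr1 : ∃ a ∈ F, a < n := by
        push_neg at h1
        obtain ⟨a, haF, ha⟩ := h1
        exact ⟨a, haF, lt_of_le_of_ne ha (fun h => hnF (h ▸ haF))⟩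
      have hstr2 : ∃ b ∈ F, n < b := by
        push_neg at h2
        obtain ⟨b, hbF, hb⟩ := h2
        exact ⟨b, hbF, lt_of_le_of_ne hb (fun h => hnF (h ▸ hbF))⟩
      obtain ⟨a0, ha0F, ha0⟩ := hstr1
      obtain ⟨b0, hb0F, hb0⟩ := hstr2
      set M := F.max.unbotD 0 with hMdef
      have hM : M = F.max' hFne := by
        rw [hMdef, ← Finset.coe_max' hFne, WithBot.unbotD_coe]
      have hMF : M ∈ F := hM ▸ F.max'_mem hFne
      have hleM : ∀ a ∈ F, a ≤ M := fun a ha => hM ▸ F.le_max' a ha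
      have hnM : n < M := lt_of_lt_of_le hb0 (hleM b0 hb0F)
      have hnE : n ∉ F.erase M := fun h => hnF (Finset.erase_subset _ _ h)
      have hcpos : 1 ≤ F.card := Finset.card_pos.2 hFne
      have hcard : (insert n (F.erase M)).card = F.card := by
        rw [Finset.card_insert_of_notMem hnE, Finset.card_erase_of_mem hMF]
        omega
      have hcmin : F.card ≤ F.min' hFne := hFS hFne
      have hcn : F.card < n := lt_of_le_of_lt (le_trans hcmin (F.min'_le a0 ha0F)) ha0
      refine ⟨by simp, ?_, ?_, ?_, ?_⟩
      · intro G hG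
        rcases List.mem_cons.1 hG with rfl | hG'
        · refine ⟨?_, Finset.insert_nonempty _ _,
            Finset.insert_subset hn (le_trans (Finset.erase_subset _ _) hFsub)⟩
          intro hne
          apply Finset.le_min'
          intro y hy
          rw [hcard]
          rcases Finset.mem_insert.1 hy with rfl | hyF
          · omega
          · exact le_trans hcmin (F.min'_le y (Finset.erase_subset _ _ hyF))
        · exact hmemt G hG'
      · refine List.Pairwise.cons ?_ hpwt
        intro G hG a ha b hb
        rcases Finset.mem_insert.1 ha with rfl | haF
        · exact lt_trans hb0 (hpw1 G hG b0 hb0F b hb)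
        · exact hpw1 G hG a (Finset.erase_subset _ _ haF) b hb
      · right
        have hMUt : M ∉ chainUnion t := by
          intro h
          obtain ⟨G', hG', hMG'⟩ := mem_chainUnion.1 h
          exact lt_irrefl M (hpw1 G' hG' M hMF M hMG')
        refine ⟨M, by rw [chainUnion_cons]; exact Finset.mem_union_left _ hMF, hnM, ?_⟩
        rw [chainUnion_cons, chainUnion_cons, Finset.insert_union,
          Finset.erase_union_distrib, Finset.erase_eq_of_notMem hMUt]
      · rw [gsum_cons, gsum_cons]
        have hxs : |x M| ≤ |x n| := habs n M hnM hn (hFsub hMF)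
        have hterm : (∑ k ∈ F, |x k|) ^ p ≤ (∑ k ∈ insert n (F.erase M), |x k|) ^ p := by
          apply Real.rpow_le_rpow (Finset.sum_nonneg fun i _ => abs_nonneg _) _ hp0
          rw [Finset.sum_insert hnE, Finset.sum_erase_eq_sub hMF]
          linarith
        linarith


lemma chainUnion_subset {S : Finset ℕ} {C : List (Finset ℕ)} (h : ∀ F ∈ C, F ⊆ S) :
    chainUnion C ⊆ S := by
  intro a ha
  obtain ⟨F, hF, haF⟩ := mem_chainUnion.1 ha
  exact h F hF haF

lemma isSchreier_subset {F G : Finset ℕ} (hF : IsSchreier F) (h : G ⊆ F) : IsSchreier G := by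
  intro hG
  have hFne : F.Nonempty := hG.mono h
  calc G.card ≤ F.card := Finset.card_le_card h
    _ ≤ F.min' hFne := hF hFne
    _ ≤ G.min' hG := Finset.min'_le _ _ (h (G.min'_mem hG))

lemma chain'_pairwise : ∀ {C : List (Finset ℕ)}, (∀ F ∈ C, F.Nonempty) →
    C.Chain' Rlt → C.Pairwise Rlt := by
  intro C
  induction C with
  | nil => simp
  | cons F t ih =>
    intro hne hc
    simp only [List.Chain', List.isChain_cons] at hc
    have hpt := ih (fun G hG => hne G (List.mem_cons_of_mem _ hG)) hc.2
    refine List.Pairwise.cons ?_ hpt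
    intro G hG
    match t, hG with
    | H :: t', hG =>
      have hFH : Rlt F H := hc.1 H rfl
      rcases List.mem_cons.1 hG with rfl | hG'
      · exact hFH
      · intro a ha b hb
        obtain ⟨c, hc'⟩ := hne H (by simp)
        exact lt_trans (hFH a ha c hc') ((List.pairwise_cons.1 hpt).1 G hG' c hc' b hb)

lemma gsum_nonneg (p : ℝ) (x : ℕ → ℝ) (C : List (Finset ℕ)) : 0 ≤ gsum p x C := by
  apply List.sum_nonneg
  intro a ha
  obtain ⟨F, _, rfl⟩ := List.mem_map.1 ha
  exact Real.rpow_nonneg (Finset.sum_nonneg fun i _ => abs_nonneg _) _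




def goodify (S : Finset ℕ) : List (Finset ℕ) → List (Finset ℕ)
  | [] => []
  | F :: t => if (F ∩ S).Nonempty then (F ∩ S) :: goodify S t else goodify S t

lemma goodify_mem {S G : Finset ℕ} :
    ∀ {C : List (Finset ℕ)}, G ∈ goodify S C → ∃ F ∈ C, G = F ∩ S ∧ G.Nonempty := by
  intro C
  induction C with
  | nil => simp [goodify]
  | cons F t ih =>
    intro hG
    simp only [goodify] at hG
    split_ifs at hG with h
    · rcases List.mem_cons.1 hG with rfl | hG'
      · exact ⟨F, by simp, rfl, h⟩
      · obtain ⟨F', hF', h1, h2⟩ := ih hG'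
        exact ⟨F', List.mem_cons_of_mem _ hF', h1, h2⟩
    · obtain ⟨F', hF', h1, h2⟩ := ih hG
      exact ⟨F', List.mem_cons_of_mem _ hF', h1, h2⟩

lemma gsum_goodify (p : ℝ) (hpne : p ≠ 0) (x : ℕ → ℝ) (S : Finset ℕ)
    (hx : ∀ a ∉ S, x a = 0) :
    ∀ C : List (Finset ℕ), gsum p x (goodify S C) = gsum p x C := by
  intro C
  induction C with
  | nil => rfl
  | cons F t ih =>
    have hsum : ∑ k ∈ F ∩ S, |x k| = ∑ k ∈ F, |x k| := by
      apply Finset.sum_subset Finset.inter_subset_left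
      intro a haF hnot
      rw [abs_eq_zero]
      exact hx a (fun haS => hnot (Finset.mem_inter.2 ⟨haF, haS⟩))
    simp only [goodify]
    split_ifs with h
    · rw [gsum_cons, gsum_cons, hsum, ih]
    · rw [Finset.not_nonempty_iff_eq_empty] at h
      rw [gsum_cons, ih, ← hsum, h]
      simp [Real.zero_rpow hpne]

lemma goodify_pairwise {S : Finset ℕ} :
    ∀ {C : List (Finset ℕ)}, C.Pairwise Rlt → (goodify S C).Pairwise Rlt := by
  intro C
  induction C with
  | nil => simp [goodify]
  | cons F t ih =>
    intro hpw
    have hpw1 := (List.pairwise_cons.1 hpw).1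
    have hpwt := (List.pairwise_cons.1 hpw).2
    simp only [goodify]
    split_ifs with h
    · refine List.Pairwise.cons ?_ (ih hpwt)
      intro G hG a ha b hb
      obtain ⟨F', hF', rfl, _⟩ := goodify_mem hG
      exact hpw1 F' hF' a (Finset.mem_inter.1 ha).1 b (Finset.mem_inter.1 hb).1
    · exact ih hpwt

def GoodSet (S : Finset ℕ) : Set (List (Finset ℕ)) :=
  {C | C ≠ [] ∧ (∀ F ∈ C, IsSchreier F ∧ F.Nonempty ∧ F ⊆ S) ∧ C.Pairwise Rlt}

lemma goodSet_finite (S : Finset ℕ) : (GoodSet S).Finite := by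
  classical
  have hinj : Set.InjOn List.toFinset (GoodSet S) := by
    intro C1 h1 C2 h2 heq
    set R' : Finset ℕ → Finset ℕ → Prop := fun F G => F.Nonempty ∧ G.Nonempty ∧ Rlt F G with hR'
    haveI : IsAntisymm (Finset ℕ) R' := by
      constructor
      rintro a b ⟨⟨u, hu⟩, ⟨v, hv⟩, hab⟩ ⟨_, _, hba⟩
      exact absurd (lt_trans (hab u hu v hv) (hba v hv u hu)) (lt_irrefl u)
    have hs : ∀ C ∈ GoodSet S, List.Pairwise R' C := by
      rintro C ⟨_, hmem, hpw⟩
      exact List.Pairwise.imp_of_mem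
        (fun ha hb h => ⟨(hmem _ ha).2.1, (hmem _ hb).2.1, h⟩) hpw
    have hnd : ∀ C ∈ GoodSet S, C.Nodup := by
      intro C hC
      refine List.Pairwise.imp ?_ (hs C hC)
      rintro a b ⟨⟨u, hu⟩, _, hab⟩ rfl
      exact absurd (hab u hu u hu) (lt_irrefl u)
    exact List.Perm.eq_of_pairwise'
      (hs C1 h1) (hs C2 h2)
      (List.perm_of_nodup_nodup_toFinset_eq (hnd C1 h1) (hnd C2 h2) heq)
  apply Set.Finite.of_finite_image ?_ hinj
  apply Set.Finite.subset (S.powerset.powerset.finite_toSet)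
  rintro T ⟨C, hC, rfl⟩
  rw [Finset.mem_coe, Finset.mem_powerset]
  intro F hF
  rw [Finset.mem_powerset]
  exact (hC.2.1 F (List.mem_toFinset.1 hF)).2.2

end BAux

open BAux

/-- A finitely supported vector with decreasing nonzero coordinates attains its
Baernstein norm at a Schreier chain covering its support. -/
theorem baernstein_norm_attained_support (p : ℝ) (hp : 1 < p) (x : ℕ → ℝ)
    (hx0 : x 0 = 0) (hfin : (Function.support x).Finite) (hxne : x ≠ 0)
    (hnn : ∀ n, 0 ≤ x n)
    (hdec : ∀ m n : ℕ, m < n → x m ≠ 0 → x n ≠ 0 → x n ≤ x m) :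
    ∃ C : List (Finset ℕ), IsSchreierChain C ∧
      (↑(chainUnion C) : Set ℕ) = Function.support x ∧
      baernsteinNorm p x = betaNorm p x C := by
  classical
  set S : Finset ℕ := hfin.toFinset with hSdef
  have hSmem : ∀ a, a ∈ S ↔ x a ≠ 0 := fun a => hfin.mem_toFinset
  have hS0 : (0:ℕ) ∉ S := by simp [hSmem, hx0]
  have hSne : S.Nonempty := by
    obtain ⟨a, ha⟩ := Function.ne_iff.1 hxne
    exact ⟨a, (hSmem a).2 (by simpa using ha)⟩
  have habs : ∀ m k : ℕ, m < k → m ∈ S → k ∈ S → |x k| ≤ |x m| := by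
    intro m k hmk hm hk
    rw [abs_of_nonneg (hnn k), abs_of_nonneg (hnn m)]
    exact hdec m k hmk ((hSmem m).1 hm) ((hSmem k).1 hk)
  have hp0 : (0:ℝ) ≤ p := le_of_lt (lt_trans one_pos hp)
  have hpne : p ≠ 0 := ne_of_gt (lt_trans one_pos hp)
  set N : ℕ := ∑ a ∈ S, a with hNdef
  set φ : List (Finset ℕ) → ℝ ×ₗ (ℕ ×ₗ ℕ) := fun C =>
    toLex (betaNorm p x C, toLex ((chainUnion C).card, N - ∑ a ∈ chainUnion C, a)) with hφdef
  have hGne : (GoodSet S).Nonempty := by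
    obtain ⟨a0, ha0⟩ := hSne
    have ha01 : 1 ≤ a0 := by
      rcases Nat.eq_zero_or_pos a0 with rfl | h
      · exact absurd ha0 hS0
      · exact h
    refine ⟨[{a0}], by simp [GoodSet], ?_, by simp⟩
    intro F hF
    rw [List.mem_singleton] at hF
    subst hF
    exact ⟨isSchreier_singleton ha01, Finset.singleton_nonempty _, by simpa using ha0⟩
  obtain ⟨C0, hC0, hmax⟩ := Set.exists_max_image (GoodSet S) φ (goodSet_finite S) hGne
  obtain ⟨hC0ne, hC0mem, hC0pw⟩ := hC0
  have hUsub : chainUnion C0 ⊆ S := chainUnion_subset (fun F hF => (hC0mem F hF).2.2)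
  have hβnn : ∀ C, betaNorm p x C = gsum p x C ^ (1/p) := fun _ => rfl
  have hUS : chainUnion C0 = S := by
    by_contra hUne
    have hnsub : ¬ S ⊆ chainUnion C0 := fun h => hUne (Finset.Subset.antisymm hUsub h)
    obtain ⟨n, hn⟩ := Finset.sdiff_nonempty.2 hnsub
    rw [Finset.mem_sdiff] at hn
    obtain ⟨hnS, hnU⟩ := hn
    obtain ⟨hne', hmem', hpw', hun', hg'⟩ :=
      insertBlock_spec p hp0 x S habs hS0 n hnS C0 hC0mem hC0pw hnU
    have hDgood : insertBlock n C0 ∈ GoodSet S := ⟨hne', hmem', hpw'⟩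
    have hle := hmax _ hDgood
    have hβ : betaNorm p x C0 ≤ betaNorm p x (insertBlock n C0) := by
      rw [hβnn, hβnn]
      exact Real.rpow_le_rpow (gsum_nonneg _ _ _) hg' (by positivity)
    have hsumleN : ∑ a ∈ chainUnion C0, a ≤ N :=
      Finset.sum_le_sum_of_subset hUsub
    have hlt : φ C0 < φ (insertBlock n C0) := by
      rw [hφdef]
      rcases lt_or_eq_of_le hβ with h | h
      · exact (Prod.Lex.lt_iff).2 (Or.inl h)
      · refine (Prod.Lex.lt_iff).2 (Or.inr ⟨h, ?_⟩)
        apply (Prod.Lex.lt_iff).2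
        dsimp only [ofLex_toLex]
        rcases hun' with he | ⟨m, hm, hnm, he⟩
        · left
          rw [he, Finset.card_insert_of_notMem hnU]
          omega
        · right
          have hnU' : n ∉ (chainUnion C0).erase m :=
            fun h' => hnU (Finset.erase_subset _ _ h')
          have hcpos : 1 ≤ (chainUnion C0).card := Finset.card_pos.2 ⟨m, hm⟩
          constructor
          · rw [he, Finset.card_insert_of_notMem hnU', Finset.card_erase_of_mem hm]
            omega
          · have h2 : ∑ a ∈ (chainUnion C0).erase m, a + m = ∑ a ∈ chainUnion C0, a :=
              Finset.sum_erase_add _ _ hm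
            rw [he, Finset.sum_insert hnU']
            omega
    exact absurd hle (not_le.2 hlt)
  have hchain : IsSchreierChain C0 :=
    ⟨hC0ne, fun F hF => ⟨(hC0mem F hF).1, (hC0mem F hF).2.1⟩, hC0pw.isChain⟩
  have hbound : ∀ r ∈ {r | ∃ C, IsSchreierChain C ∧ r = betaNorm p x C},
      r ≤ betaNorm p x C0 := by
    rintro r ⟨C, ⟨hCne, hCmem, hCch⟩, rfl⟩
    have hpwC := chain'_pairwise (fun F hF => (hCmem F hF).2) hCch
    have hxoff : ∀ a ∉ S, x a = 0 := by
      intro a ha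
      by_contra h
      exact ha ((hSmem a).2 h)
    have hgeq : gsum p x (goodify S C) = gsum p x C := gsum_goodify p hpne x S hxoff C
    rcases eq_or_ne (goodify S C) [] with hnil | hnil
    · have hz : gsum p x C = 0 := by rw [← hgeq, hnil, gsum_nil]
      have hz' : betaNorm p x C = 0 := by
        rw [hβnn, hz, Real.zero_rpow (by positivity)]
      rw [hz', hβnn]
      exact Real.rpow_nonneg (gsum_nonneg _ _ _) _
    · have hDgood : goodify S C ∈ GoodSet S := by
        refine ⟨hnil, ?_, goodify_pairwise hpwC⟩
        intro G hG
        obtain ⟨F, hF, rfl, hGne'⟩ := goodify_mem hG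
        exact ⟨isSchreier_subset (hCmem F hF).1 Finset.inter_subset_left, hGne',
          Finset.inter_subset_right⟩
      have hle := hmax _ hDgood
      have hβ : betaNorm p x (goodify S C) ≤ betaNorm p x C0 := by
        rcases (Prod.Lex.le_iff).1 hle with h | h
        · exact le_of_lt h
        · exact le_of_eq h.1
      calc betaNorm p x C = betaNorm p x (goodify S C) := by rw [hβnn, hβnn, hgeq]
        _ ≤ _ := hβ
  refine ⟨C0, hchain, ?_, ?_⟩
  · rw [hUS]
    exact hfin.coe_toFinset
  · have hmem0 : betaNorm p x C0 ∈ {r | ∃ C, IsSchreierChain C ∧ r = betaNorm p x C} :=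
      ⟨C0, hchain, rfl⟩
    exact le_antisymm (csSup_le ⟨_, hmem0⟩ hbound) (le_csSup ⟨_, hbound⟩ hmem0)
end

section
/- Let x = Σ_{j=1}^k αⱼ e_{mⱼ} where α₁,…,α_k ≥ 0 and {m₁,…,m_k} is a Schreier set (indices not necessarily distinct). Then for 1 < p < ∞, the Baernstein norm satisfies ‖x‖_{B_p} = Σ_{j=1}^k αⱼ. -/
open Finset Filter

private lemma rpow_add_le (p : ℝ) (hp : 1 ≤ p) {a b : ℝ} (ha : 0 ≤ a) (hb : 0 ≤ b) :
    a ^ p + b ^ p ≤ (a + b) ^ p := by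
  have hp0 : p ≠ 0 := by linarith
  have hab : 0 ≤ a + b := by linarith
  have hp1 : (0:ℝ) ≤ p - 1 := by linarith
  have key : ∀ c : ℝ, 0 ≤ c → c ≤ a + b → c ^ p ≤ c * (a + b) ^ (p - 1) := by
    intro c hc hcab
    have h : c ^ p = c ^ (1 + (p - 1)) := by ring_nf
    rw [h, Real.rpow_add' hc (by simpa using hp0), Real.rpow_one]
    exact mul_le_mul_of_nonneg_left (Real.rpow_le_rpow hc hcab hp1) hc
  have h1 := key a ha (by linarith)
  have h2 := key b hb (by linarith)
  have h3 : (a + b) ^ p = (a + b) * (a + b) ^ (p - 1) := by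
    have h : (a + b) ^ p = (a + b) ^ (1 + (p - 1)) := by ring_nf
    rw [h, Real.rpow_add' hab (by simpa using hp0), Real.rpow_one]
  rw [h3]
  nlinarith [Real.rpow_nonneg hab (p - 1)]

private lemma list_rpow_sum_le (p : ℝ) (hp : 1 ≤ p) :
    ∀ l : List ℝ, (∀ t ∈ l, 0 ≤ t) → (l.map (· ^ p)).sum ≤ l.sum ^ p := by
  intro l
  induction l with
  | nil => intro _; simp [Real.zero_rpow (by linarith : p ≠ 0)]
  | cons a l ih =>
    intro h
    have ha : 0 ≤ a := h a (List.mem_cons_self)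
    have hl : ∀ t ∈ l, 0 ≤ t := fun t ht => h t (List.mem_cons_of_mem _ ht)
    have hls : 0 ≤ l.sum := List.sum_nonneg hl
    simp only [List.map_cons, List.sum_cons]
    calc a ^ p + (l.map (· ^ p)).sum ≤ a ^ p + l.sum ^ p := by linarith [ih hl]
      _ ≤ (a + l.sum) ^ p := rpow_add_le p hp ha hls

private def SRel : Finset ℕ → Finset ℕ → Prop := fun F G => ∀ a ∈ F, ∀ b ∈ G, a < b

private lemma chain_rel_of_mem :
    ∀ (l : List (Finset ℕ)) (F : Finset ℕ), (F :: l).Chain' SRel →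
      (∀ G ∈ l, G.Nonempty) → ∀ G ∈ l, SRel F G := by
  intro l
  induction l with
  | nil => simp
  | cons G l' ih =>
    intro F h hne H hH
    have hFG : SRel F G := (List.isChain_cons_cons.mp h).1
    rcases List.mem_cons.mp hH with rfl | hH'
    · exact hFG
    · have hGH := ih G (List.isChain_cons_cons.mp h).2
        (fun G' hG' => hne G' (List.mem_cons_of_mem _ hG')) H hH'
      obtain ⟨c, hc⟩ := hne G (List.mem_cons_self)
      intro a ha b hb
      exact lt_trans (hFG a ha c hc) (hGH c hc b hb)

private lemma mem_chainUnion {n : ℕ} : ∀ {C : List (Finset ℕ)},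
    n ∈ chainUnion C ↔ ∃ F ∈ C, n ∈ F := by
  intro C
  induction C with
  | nil => simp [chainUnion]
  | cons F l ih =>
    show n ∈ F ∪ chainUnion l ↔ _
    simp [Finset.mem_union, ih]

private lemma sum_map_eq (x : ℕ → ℝ) :
    ∀ C : List (Finset ℕ), C.Chain' SRel → (∀ F ∈ C, F.Nonempty) →
      (C.map (fun F => ∑ n ∈ F, x n)).sum = ∑ n ∈ chainUnion C, x n := by
  intro C
  induction C with
  | nil => simp [chainUnion]
  | cons F l ih =>
    intro hch hne
    have hd : Disjoint F (chainUnion l) := by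
      rw [Finset.disjoint_left]
      intro a haF hau
      obtain ⟨G, hG, haG⟩ := mem_chainUnion.mp hau
      exact lt_irrefl a (chain_rel_of_mem l F hch
        (fun G' hG' => hne G' (List.mem_cons_of_mem _ hG')) G hG a haF a haG)
    have hcu : chainUnion (F :: l) = F ∪ chainUnion l := rfl
    rw [List.map_cons, List.sum_cons, hcu, Finset.sum_union hd,
      ih hch.tail (fun G hG => hne G (List.mem_cons_of_mem _ hG))]

/-- Baernstein norm of a vector supported on a Schreier set (with possibly repeated indices). -/
theorem baernstein_norm_on_schreier_set (p : ℝ) (hp : 1 < p) (k : ℕ) (hk : 1 ≤ k)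
    (α : Fin k → ℝ) (hα : ∀ j, 0 ≤ α j) (m : Fin k → ℕ)
    (hS : IsSchreier (Finset.univ.image m)) :
    baernsteinNorm p (fun n => ∑ j : Fin k, if m j = n then α j else 0) = ∑ j : Fin k, α j := by
  set x : ℕ → ℝ := fun n => ∑ j : Fin k, if m j = n then α j else 0 with hxdef
  set S : Finset ℕ := Finset.univ.image m with hSdef
  set A : ℝ := ∑ j : Fin k, α j with hAdef
  have hp0 : p ≠ 0 := by positivity
  have hp1 : (1:ℝ) ≤ p := le_of_lt hp
  have hA0 : 0 ≤ A := Finset.sum_nonneg fun j _ => hα j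
  have hxnn : ∀ n, 0 ≤ x n := fun n =>
    Finset.sum_nonneg fun j _ => by split <;> simp [hα j]
  have hx0 : ∀ n ∉ S, x n = 0 := by
    intro n hn
    apply Finset.sum_eq_zero
    intro j _
    split
    · exact absurd (Finset.mem_image.mpr ⟨j, Finset.mem_univ j, by assumption⟩) hn
    · rfl
  have hSne : S.Nonempty := by
    have : Nonempty (Fin k) := ⟨⟨0, hk⟩⟩
    obtain ⟨j⟩ := this
    exact ⟨m j, Finset.mem_image.mpr ⟨j, Finset.mem_univ j, rfl⟩⟩
  have hSsum : ∑ n ∈ S, x n = A := by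
    rw [hxdef, Finset.sum_comm]
    apply Finset.sum_congr rfl
    intro j _
    rw [Finset.sum_ite_eq S (m j) (fun _ => α j),
      if_pos (Finset.mem_image.mpr ⟨j, Finset.mem_univ j, rfl⟩)]
  have habs : ∀ F : Finset ℕ, (∑ n ∈ F, |x n|) = ∑ n ∈ F, x n :=
    fun F => Finset.sum_congr rfl fun n _ => abs_of_nonneg (hxnn n)
  have hpowA : (A ^ p) ^ (1/p) = A := by
    rw [← Real.rpow_mul hA0, mul_one_div_cancel hp0, Real.rpow_one]
  have hupper : ∀ r ∈ {r | ∃ C : List (Finset ℕ), IsSchreierChain C ∧ r = betaNorm p x C},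
      r ≤ A := by
    rintro r ⟨C, ⟨hCne, hCs, hCch⟩, rfl⟩
    have hne : ∀ F ∈ C, F.Nonempty := fun F hF => (hCs F hF).2
    have hmap : (C.map fun F => (∑ n ∈ F, |x n|) ^ p)
        = (C.map fun F => ∑ n ∈ F, x n).map (· ^ p) := by
      rw [List.map_map]
      exact List.map_congr_left fun F _ => by rw [Function.comp_apply, habs]
    have hnn : ∀ t ∈ C.map fun F => ∑ n ∈ F, x n, 0 ≤ t := by
      intro t ht
      obtain ⟨F, _, rfl⟩ := List.mem_map.mp ht
      exact Finset.sum_nonneg fun n _ => hxnn n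
    have hT : 0 ≤ (C.map fun F => ∑ n ∈ F, x n).sum := List.sum_nonneg hnn
    have hsum : (C.map fun F => ∑ n ∈ F, x n).sum ≤ A := by
      rw [sum_map_eq x C hCch hne]
      calc ∑ n ∈ chainUnion C, x n = ∑ n ∈ chainUnion C ∩ S, x n := by
            refine (Finset.sum_subset Finset.inter_subset_left ?_).symm
            intro n hn hn'
            exact hx0 n (fun hnS => hn' (Finset.mem_inter.mpr ⟨hn, hnS⟩))
        _ ≤ ∑ n ∈ S, x n := Finset.sum_le_sum_of_subset_of_nonneg
            Finset.inter_subset_right (fun n _ _ => hxnn n)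
        _ = A := hSsum
    have h1 : (C.map fun F => (∑ n ∈ F, |x n|) ^ p).sum
        ≤ ((C.map fun F => ∑ n ∈ F, x n).sum) ^ p := by
      rw [hmap]
      exact list_rpow_sum_le p hp1 _ hnn
    have h0 : 0 ≤ (C.map fun F => (∑ n ∈ F, |x n|) ^ p).sum := by
      apply List.sum_nonneg
      intro t ht
      obtain ⟨F, _, rfl⟩ := List.mem_map.mp ht
      exact Real.rpow_nonneg (Finset.sum_nonneg fun n _ => abs_nonneg _) p
    calc betaNorm p x C ≤ (((C.map fun F => ∑ n ∈ F, x n).sum) ^ p) ^ (1/p) :=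
          Real.rpow_le_rpow h0 h1 (by positivity)
      _ = (C.map fun F => ∑ n ∈ F, x n).sum := by
          rw [← Real.rpow_mul hT, mul_one_div_cancel hp0, Real.rpow_one]
      _ ≤ A := hsum
  have hmem : A ∈ {r | ∃ C : List (Finset ℕ), IsSchreierChain C ∧ r = betaNorm p x C} := by
    refine ⟨[S], ⟨List.cons_ne_nil _ _, ?_, ?_⟩, ?_⟩
    · intro F hF
      rw [List.mem_singleton] at hF
      subst hF
      exact ⟨hS, hSne⟩
    · exact List.isChain_singleton _
    · rw [betaNorm]
      simp only [List.map_cons, List.map_nil, List.sum_cons, List.sum_nil, add_zero]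
      rw [habs, hSsum, hpowA]
  exact le_antisymm (Real.sSup_le hupper hA0) (le_csSup ⟨A, hupper⟩ hmem)
end

section
/- Let I be a (two-sided) ideal of a Banach algebra A and let p ∈ A be a nonzero idempotent with dist(p, I) < ‖p‖^{-2}. Then p ∈ I. -/
/-- An idempotent close enough to a two-sided ideal of a Banach algebra belongs to the ideal. -/
theorem idempotent_mem_of_dist_lt {A : Type*} [NormedRing A] [CompleteSpace A]
    (I : TwoSidedIdeal A) (p : A) (hp : p * p = p) (hp0 : p ≠ 0)
    (h : Metric.infDist p (I : Set A) < (‖p‖ ^ 2)⁻¹) : p ∈ I := by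
  obtain ⟨a, haI, ha⟩ := (Metric.infDist_lt_iff ⟨0, I.zero_mem⟩).mp h
  have hqI : p * a * p ∈ I := I.mul_mem_right _ _ (I.mul_mem_left _ _ haI)
  set x := p - p * a * p with hx
  have hnp : 0 < ‖p‖ := norm_pos_iff.mpr hp0
  have hxnorm : ‖x‖ < 1 := by
    have hx' : x = p * (p - a) * p := by rw [hx, mul_sub, hp, sub_mul, hp]
    calc ‖x‖ ≤ ‖p‖ * ‖p - a‖ * ‖p‖ := by
            rw [hx']; exact le_trans (norm_mul_le _ _)
              (mul_le_mul_of_nonneg_right (norm_mul_le _ _) (norm_nonneg _))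
      _ < ‖p‖ * (‖p‖ ^ 2)⁻¹ * ‖p‖ := by
            have := dist_eq_norm p a ▸ ha
            gcongr
      _ = 1 := by field_simp
  let u : Aˣ := Units.oneSub x hxnorm
  have hpu : p * (u : A) = p * a * p := by
    show p * (1 - x) = p * a * p
    have hpx : p * x = x := by
      rw [hx, mul_sub, hp, ← mul_assoc, ← mul_assoc, hp]
    rw [mul_sub, mul_one, hpx, hx, sub_sub_cancel]
  have : p = (p * a * p) * ((u⁻¹ : Aˣ) : A) := by
    rw [← hpu, mul_assoc, u.mul_inv, mul_one]
  rw [this]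
  exact I.mul_mem_right _ _ hqI
end

section
/- For every 1 < p < ∞ and every sequence x of scalars, ‖x‖_{ℓ_p}^p ≤ K_p · ‖x‖_∞^{p−1} · ‖x‖_{S_1}, where K_p = (3·2^{p−1} − 2)/(2^{p−1} − 1). (Here the value ∞ is allowed on both sides.) -/
open Finset Filter

open ENNReal

noncomputable def lpPow (p : ℝ) (x : ℕ → ℝ) : ℝ≥0∞ := ∑' n, ENNReal.ofReal (|x n| ^ p)

noncomputable def supNormE (x : ℕ → ℝ) : ℝ≥0∞ := ⨆ n, ENNReal.ofReal |x n|

noncomputable def s1NormE (x : ℕ → ℝ) : ℝ≥0∞ :=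
  ⨆ F ∈ {F : Finset ℕ | IsSchreier F ∧ F.Nonempty}, ENNReal.ofReal (∑ n ∈ F, |x n|)

noncomputable def spNormE (p : ℝ) (x : ℕ → ℝ) : ℝ≥0∞ :=
  ⨆ F ∈ {F : Finset ℕ | IsSchreier F ∧ F.Nonempty}, ENNReal.ofReal (mu p x F)

private lemma jamesonGeomAux {r : ℝ} (h0 : 0 ≤ r) (h1 : r < 1) (K : ℕ) :
    ∑ k ∈ range K, r ^ k ≤ (1 - r)⁻¹ := by
  have h2 : (0:ℝ) < 1 - r := by linarith
  rw [geom_sum_eq (by exact ne_of_lt h1), ← neg_div_neg_eq]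
  have : -(r ^ K - 1) = 1 - r ^ K := by ring
  rw [this, show -(r - 1) = 1 - r by ring, div_le_iff₀ h2, inv_mul_cancel₀ (ne_of_gt h2)]
  have : 0 ≤ r ^ K := pow_nonneg h0 K
  linarith

private lemma jamesonSL {y : ℕ → ℝ} (hy : Antitone y) {t c : ℕ}
    (Q : Finset ℕ) (hQ : Q ⊆ range t) (hc : Q.card = c) :
    ∑ j ∈ Ico (t - c) t, y j ≤ ∑ j ∈ Q, y j := by
  classical
  set I := Ico (t - c) t with hI
  have hct : c ≤ t := hc ▸ (le_trans (card_le_card hQ) (by simp))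
  have hIcard : I.card = c := by rw [hI, Nat.card_Ico]; omega
  have key1 : ∀ j ∈ Q \ I, y (t - c) ≤ y j := by
    intro j hj
    rw [Finset.mem_sdiff] at hj
    have hjt : j < t := by simpa using hQ hj.1
    have : j < t - c := by
      rcases hj with ⟨_, hni⟩
      rw [hI, mem_Ico] at hni
      omega
    exact hy (le_of_lt this)
  have key2 : ∀ j ∈ I \ Q, y j ≤ y (t - c) := by
    intro j hj
    exact hy (mem_Ico.mp (mem_sdiff.mp hj).1).1
  have hcard : (I \ Q).card = (Q \ I).card := by
    have h1 := Finset.card_sdiff_add_card_inter I Q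
    have h2 := Finset.card_sdiff_add_card_inter Q I
    rw [inter_comm] at h2
    omega
  calc ∑ j ∈ I, y j = ∑ j ∈ I ∩ Q, y j + ∑ j ∈ I \ Q, y j :=
        (Finset.sum_inter_add_sum_sdiff I Q y).symm
    _ ≤ ∑ j ∈ I ∩ Q, y j + (I \ Q).card • y (t - c) := by
        gcongr
        exact Finset.sum_le_card_nsmul _ _ _ key2
    _ ≤ ∑ j ∈ I ∩ Q, y j + ∑ j ∈ Q \ I, y j := by
        gcongr
        rw [hcard]
        exact Finset.card_nsmul_le_sum _ _ _ key1
    _ = ∑ j ∈ Q, y j := by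
        rw [inter_comm]
        exact Finset.sum_inter_add_sum_sdiff Q I y

private lemma jamesonRearrange (x : ℕ → ℝ) (N : ℕ) (S : ℝ) (hS0 : 0 ≤ S)
    (hSch : ∀ F : Finset ℕ, IsSchreier F → F.Nonempty → ∑ n ∈ F, |x n| ≤ S) :
    ∃ y : ℕ → ℝ, (∀ j, 0 ≤ y j) ∧ Antitone y ∧
      (∀ j, y j = 0 ∨ ∃ n, y j = |x n|) ∧
      (∀ m : ℕ, 1 ≤ m → ∑ j ∈ Ico (m - 1) (2 * m - 1), y j ≤ S) ∧
      (∀ q : ℝ, ∑ j ∈ range N, y j ^ q = ∑ n ∈ range N, |x (n + 1)| ^ q) := by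
  classical
  set f : Fin N → ℝ := fun i => -|x (i.1 + 1)| with hf
  set σ := Tuple.sort f with hσ
  set y : ℕ → ℝ := fun j => if h : j < N then |x ((σ ⟨j, h⟩).1 + 1)| else 0 with hy
  have hyval : ∀ (j : ℕ) (h : j < N), y j = |x ((σ ⟨j, h⟩).1 + 1)| := fun j h => dif_pos h
  have hy0 : ∀ j, 0 ≤ y j := by
    intro j
    by_cases h : j < N
    · rw [hyval j h]; exact abs_nonneg _
    · simp [hy, h]
  have hmono := Tuple.monotone_sort f
  have hanti : Antitone y := by
    intro j j' hjj'
    by_cases h' : j' < N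
    · have h : j < N := lt_of_le_of_lt hjj' h'
      have h2 := hmono (show (⟨j, h⟩ : Fin N) ≤ ⟨j', h'⟩ from hjj')
      simp only [Function.comp_apply, hf] at h2
      rw [hyval j h, hyval j' h']
      linarith
    · have : y j' = 0 := dif_neg h'
      rw [this]; exact hy0 j
  have hvals : ∀ j, y j = 0 ∨ ∃ n, y j = |x n| := by
    intro j
    by_cases h : j < N
    · exact Or.inr ⟨(σ ⟨j, h⟩).1 + 1, hyval j h⟩
    · exact Or.inl (dif_neg h)
  refine ⟨y, hy0, hanti, hvals, ?_, ?_⟩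
  · -- Schreier block bound
    intro m hm
    set t := min (2 * m - 1) N with ht
    have htN : t ≤ N := min_le_right _ _
    have hred : ∑ j ∈ Ico (m - 1) (2 * m - 1), y j = ∑ j ∈ Ico (m - 1) t, y j := by
      refine (Finset.sum_subset (Ico_subset_Ico le_rfl (min_le_left _ _)) ?_).symm
      intro j hj hj2
      rw [mem_Ico] at hj hj2
      have : ¬ j < N := by omega
      exact dif_neg this
    rw [hred]
    rcases le_or_gt t (m - 1) with hcase | hcase
    · rw [Ico_eq_empty (by omega), sum_empty]; exact hS0
    · set c := t - (m - 1) with hc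
      have hc1 : 1 ≤ c := by omega
      have hcm : c ≤ m := by omega
      have hbound : ∀ i ∈ range t, i < N := fun i hi => lt_of_lt_of_le (mem_range.mp hi) htN
      set T : Finset (Fin N) := (range t).attachFin hbound with hT
      have hTcard : T.card = t := by rw [hT, Finset.card_attachFin, card_range]
      set ι : Fin N → ℕ := fun i => (σ i).1 + 1 with hι
      have hιinj : Function.Injective ι := by
        intro a b hab
        exact σ.injective (Fin.val_injective (Nat.succ_injective hab))
      set I := T.image ι with hI
      have hIcard : I.card = t := by
        rw [hI, Finset.card_image_of_injective _ hιinj, hTcard]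
      have hIpos : ∀ n ∈ I, 1 ≤ n := by
        intro n hn
        rw [hI, mem_image] at hn
        obtain ⟨i, _, rfl⟩ := hn
        exact Nat.le_add_left 1 _
      set I' := I.filter (fun n => m ≤ n) with hI'
      have hI'card : c ≤ I'.card := by
        have h1 : I.filter (fun n => ¬ m ≤ n) ⊆ Ico 1 m := by
          intro n hn
          rw [mem_filter] at hn
          rw [mem_Ico]
          exact ⟨hIpos n hn.1, by omega⟩
        have h2 : (I.filter (fun n => ¬ m ≤ n)).card ≤ m - 1 :=
          le_trans (card_le_card h1) (by rw [Nat.card_Ico])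
        have h3 := Finset.card_filter_add_card_filter_not
          (s := I) (p := fun n => m ≤ n)
        rw [hIcard] at h3
        have h4 : I'.card = (I.filter (fun n => m ≤ n)).card := by rw [hI']
        omega
      obtain ⟨F, hFI', hFcard⟩ := Finset.exists_subset_card_eq hI'card
      have hFI : F ⊆ I := hFI'.trans (filter_subset _ _)
      have hFne : F.Nonempty := card_pos.mp (by omega)
      have hFS : IsSchreier F := by
        intro hne
        have hmem := hFI' (F.min'_mem hne)
        rw [hI', mem_filter] at hmem
        omega
      have hFsum := hSch F hFS hFne
      obtain ⟨P, hPT, hPF⟩ := Finset.subset_image_iff.mp (hI ▸ hFI)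
      have hPcard : P.card = c := by
        rw [← hFcard, ← hPF, Finset.card_image_of_injective _ hιinj]
      have hsumF : ∑ n ∈ F, |x n| = ∑ i ∈ P, y i.1 := by
        rw [← hPF, Finset.sum_image (fun a _ b _ h => hιinj h)]
        refine Finset.sum_congr rfl fun i _ => ?_
        rw [hyval i.1 i.2]
      set Q := P.image Fin.val with hQ
      have hQcard : Q.card = c := by
        rw [hQ, Finset.card_image_of_injective _ Fin.val_injective, hPcard]
      have hQsub : Q ⊆ range t := by
        intro j hj
        rw [hQ, mem_image] at hj
        obtain ⟨i, hiP, rfl⟩ := hj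
        have := hPT hiP
        rw [hT, Finset.mem_attachFin] at this
        exact this
      have hsumQ : ∑ i ∈ P, y i.1 = ∑ j ∈ Q, y j := by
        rw [hQ, Finset.sum_image (fun a _ b _ h => Fin.val_injective h)]
      have hsl := jamesonSL hanti Q hQsub hQcard
      have htc : t - c = m - 1 := by omega
      calc ∑ j ∈ Ico (m - 1) t, y j = ∑ j ∈ Ico (t - c) t, y j := by rw [htc]
        _ ≤ ∑ j ∈ Q, y j := hsl
        _ = ∑ n ∈ F, |x n| := by rw [hsumF, hsumQ]
        _ ≤ S := hFsum
  · -- sum equality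
    intro q
    rw [← Fin.sum_univ_eq_sum_range (fun j => y j ^ q) N,
        ← Fin.sum_univ_eq_sum_range (fun n => |x (n + 1)| ^ q) N]
    rw [← Equiv.sum_comp σ (fun i : Fin N => |x (i.1 + 1)| ^ q)]
    refine Finset.sum_congr rfl fun i _ => ?_
    rw [hyval i.1 i.2]

private lemma jamesonKey {p A S : ℝ} (hp : 1 < p) (hA : 0 < A) (hAS : A ≤ S)
    {y : ℕ → ℝ} (hy0 : ∀ n, 0 ≤ y n) (hyA : ∀ n, y n ≤ A) (hanti : Antitone y)
    (hS : ∀ m : ℕ, 1 ≤ m → ∑ j ∈ Ico (m - 1) (2 * m - 1), y j ≤ S) (N : ℕ) :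
    ∑ j ∈ range N, y j ^ p ≤
      (3 * (2:ℝ) ^ (p - 1) - 2) / ((2:ℝ) ^ (p - 1) - 1) * A ^ (p - 1) * S := by
  have hq : 0 < p - 1 := by linarith
  have hp0 : 0 < p := by linarith
  have hS0 : 0 < S := lt_of_lt_of_le hA hAS
  set R : ℝ := (2:ℝ) ^ (p - 1) with hR
  have hR1 : 1 < R := by
    rw [hR]
    rw [Real.one_lt_rpow_iff_of_pos (by norm_num)]
    exact Or.inl ⟨one_lt_two, hq⟩
  set r : ℝ := R⁻¹ with hr
  have hr0 : 0 < r := by rw [hr]; exact inv_pos.mpr (lt_trans one_pos hR1)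
  have hr1 : r < 1 := by rw [hr]; exact inv_lt_one_of_one_lt₀ hR1
  -- relation between (2⁻¹)^K powers and r^K
  have hhalf : ∀ K : ℕ, ((2⁻¹ : ℝ) ^ K) ^ (p - 1) = r ^ K := by
    intro K
    rw [← Real.rpow_natCast (2⁻¹ : ℝ) K, ← Real.rpow_natCast r K,
        ← Real.rpow_mul (by norm_num : (0:ℝ) ≤ 2⁻¹), mul_comm,
        Real.rpow_mul (by norm_num : (0:ℝ) ≤ 2⁻¹), Real.inv_rpow (by norm_num : (0:ℝ) ≤ 2)]
  set M : ℕ := ⌈2 * S / A⌉₊ with hM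
  have hMr : 2 * S / A ≤ (M : ℝ) := Nat.le_ceil _
  have hdiv2 : (2:ℝ) ≤ 2 * S / A := by
    rw [le_div_iff₀ hA]; linarith
  have hM2 : 2 ≤ M := by
    have : (2:ℝ) ≤ (M:ℝ) := le_trans hdiv2 hMr
    exact_mod_cast this
  have hM1 : ((M:ℝ)) < 2 * S / A + 1 := Nat.ceil_lt_add_one (by positivity)
  have hMA : 2 * S ≤ A * M := by
    rw [div_le_iff₀ hA] at hMr; linarith
  -- head bound
  have head : ∑ j ∈ range (M - 1), y j ^ p ≤ 2 * S * A ^ (p - 1) := by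
    have h1 : ∑ j ∈ range (M - 1), y j ^ p ≤ (M - 1) • (A ^ p) := by
      have := Finset.sum_le_card_nsmul (range (M - 1)) (fun j => y j ^ p) (A ^ p)
        (fun j _ => Real.rpow_le_rpow (hy0 j) (hyA j) (le_of_lt hp0))
      simpa using this
    have h2 : ((M - 1 : ℕ) : ℝ) ≤ 2 * S / A := by
      rw [Nat.cast_sub (by omega)]
      push_cast
      linarith
    have h3 : (0:ℝ) ≤ A ^ p := Real.rpow_nonneg (le_of_lt hA) p
    calc ∑ j ∈ range (M - 1), y j ^ p ≤ ((M - 1 : ℕ) : ℝ) * A ^ p := by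
          rw [nsmul_eq_mul] at h1; exact h1
      _ ≤ (2 * S / A) * A ^ p := by gcongr
      _ = 2 * S * A ^ (p - 1) := by
          have e2 := Real.rpow_add hA 1 (p - 1)
          rw [Real.rpow_one] at e2
          have e3 : 1 + (p - 1) = p := by ring
          rw [e3] at e2
          rw [e2]
          field_simp
  -- pointwise decay bound
  have hdec : ∀ K : ℕ, y (M * 2 ^ K - 1) ≤ A * (2⁻¹ : ℝ) ^ K := by
    intro K
    cases K with
    | zero => simpa using hyA (M - 1)
    | succ K' =>
      set m' : ℕ := M * 2 ^ K' with hm'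
      have hm'1 : 1 ≤ m' := by
        have : 1 ≤ 2 ^ K' := Nat.one_le_two_pow
        calc 1 ≤ M := by omega
          _ ≤ M * 2 ^ K' := Nat.le_mul_of_pos_right M (by omega)
      have hblock : (m' : ℝ) * y (2 * m' - 2) ≤ S := by
        have h1 : ∀ j ∈ Ico (m' - 1) (2 * m' - 1), y (2 * m' - 2) ≤ y j := by
          intro j hj
          rw [mem_Ico] at hj
          exact hanti (by omega)
        have h2 := Finset.card_nsmul_le_sum (Ico (m' - 1) (2 * m' - 1)) y
          (y (2 * m' - 2)) h1
        rw [Nat.card_Ico] at h2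
        have h3 : 2 * m' - 1 - (m' - 1) = m' := by omega
        rw [h3, nsmul_eq_mul] at h2
        exact le_trans h2 (hS m' hm'1)
      have hmono2 : y (M * 2 ^ (K' + 1) - 1) ≤ y (2 * m' - 2) := by
        apply hanti
        have : M * 2 ^ (K' + 1) = 2 * m' := by rw [hm', pow_succ]; ring
        omega
      have h4 : y (2 * m' - 2) ≤ S / (m' : ℝ) := by
        rw [le_div_iff₀ (by exact_mod_cast hm'1 : (0:ℝ) < (m':ℝ))]
        linarith [hblock]
      refine le_trans hmono2 (le_trans h4 ?_)
      rw [div_le_iff₀ (by exact_mod_cast hm'1 : (0:ℝ) < (m':ℝ))]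
      have hcast : (m' : ℝ) = (M : ℝ) * 2 ^ K' := by
        rw [hm']; push_cast; ring
      rw [hcast]
      have hpow : (0:ℝ) < 2 ^ K' := by positivity
      have : A * (2⁻¹:ℝ) ^ (K' + 1) * ((M:ℝ) * 2 ^ K') = A * (M:ℝ) / 2 := by
        rw [pow_succ]
        have h2K : (2⁻¹:ℝ) ^ K' * 2 ^ K' = 1 := by
          rw [← mul_pow]; norm_num
        field_simp
        nlinarith [h2K]
      rw [this]
      rw [le_div_iff₀ (by norm_num : (0:ℝ) < 2)]
      nlinarith [hMA]
  -- tail bound by induction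
  have tail : ∀ K : ℕ, ∑ j ∈ Ico (M - 1) (M * 2 ^ K - 1), y j ^ p ≤
      (∑ k ∈ range K, r ^ k) * (A ^ (p - 1) * S) := by
    intro K
    induction K with
    | zero => simp
    | succ K ih =>
      have hle1 : M - 1 ≤ M * 2 ^ K - 1 := by
        have : M ≤ M * 2 ^ K := Nat.le_mul_of_pos_right M (by positivity)
        omega
      have hle2 : M * 2 ^ K - 1 ≤ M * 2 ^ (K + 1) - 1 := by
        have : M * 2 ^ K ≤ M * 2 ^ (K + 1) := by
          apply Nat.mul_le_mul_left
          exact Nat.pow_le_pow_right (by norm_num) (by omega)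
        omega
      rw [← Finset.sum_Ico_consecutive (fun j => y j ^ p) hle1 hle2]
      -- block bound
      have block : ∑ j ∈ Ico (M * 2 ^ K - 1) (M * 2 ^ (K + 1) - 1), y j ^ p ≤
          r ^ K * (A ^ (p - 1) * S) := by
        set d : ℝ := A * (2⁻¹ : ℝ) ^ K with hd
        have hd0 : 0 ≤ d := by positivity
        have hterm : ∀ j ∈ Ico (M * 2 ^ K - 1) (M * 2 ^ (K + 1) - 1),
            y j ^ p ≤ d ^ (p - 1) * y j := by
          intro j hj
          rw [mem_Ico] at hj
          have hyj : y j ≤ d := le_trans (hanti hj.1) (hdec K)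
          rcases eq_or_lt_of_le (hy0 j) with h0 | h0
          · rw [← h0, Real.zero_rpow (ne_of_gt hp0), mul_zero]
          · have e2 := Real.rpow_add h0 (p - 1) 1
            rw [Real.rpow_one] at e2
            have e3 : p - 1 + 1 = p := by ring
            rw [e3] at e2
            rw [e2]
            have : y j ^ (p - 1) ≤ d ^ (p - 1) :=
              Real.rpow_le_rpow (hy0 j) hyj (le_of_lt hq)
            exact mul_le_mul_of_nonneg_right this (hy0 j)
        have hblocksum : ∑ j ∈ Ico (M * 2 ^ K - 1) (M * 2 ^ (K + 1) - 1), y j ≤ S := by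
          have hm1 : 1 ≤ M * 2 ^ K := by
            have : 1 ≤ 2 ^ K := Nat.one_le_two_pow
            have : M ≤ M * 2 ^ K := Nat.le_mul_of_pos_right M (by omega)
            omega
          have := hS (M * 2 ^ K) hm1
          have heq : 2 * (M * 2 ^ K) = M * 2 ^ (K + 1) := by rw [pow_succ]; ring
          rw [heq] at this
          exact this
        calc ∑ j ∈ Ico (M * 2 ^ K - 1) (M * 2 ^ (K + 1) - 1), y j ^ p
            ≤ ∑ j ∈ Ico (M * 2 ^ K - 1) (M * 2 ^ (K + 1) - 1), d ^ (p - 1) * y j :=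
              Finset.sum_le_sum hterm
          _ = d ^ (p - 1) * ∑ j ∈ Ico (M * 2 ^ K - 1) (M * 2 ^ (K + 1) - 1), y j := by
              rw [Finset.mul_sum]
          _ ≤ d ^ (p - 1) * S := by
              apply mul_le_mul_of_nonneg_left hblocksum
              positivity
          _ = r ^ K * (A ^ (p - 1) * S) := by
              rw [hd, Real.mul_rpow (le_of_lt hA) (by positivity), hhalf K]
              ring
      rw [Finset.sum_range_succ]
      calc ∑ j ∈ Ico (M - 1) (M * 2 ^ K - 1), y j ^ p +
            ∑ j ∈ Ico (M * 2 ^ K - 1) (M * 2 ^ (K + 1) - 1), y j ^ p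
          ≤ (∑ k ∈ range K, r ^ k) * (A ^ (p - 1) * S) + r ^ K * (A ^ (p - 1) * S) :=
            add_le_add ih block
        _ = (∑ k ∈ range K, r ^ k + r ^ K) * (A ^ (p - 1) * S) := by ring
  -- assemble
  have hcover : N ≤ M * 2 ^ N - 1 := by
    have h1 : N < 2 ^ N := Nat.lt_two_pow_self
    have h2 : 2 ^ N ≤ M * 2 ^ N := Nat.le_mul_of_pos_left _ (by omega)
    omega
  have hsplit : ∑ j ∈ range (M * 2 ^ N - 1), y j ^ p =
      ∑ j ∈ range (M - 1), y j ^ p + ∑ j ∈ Ico (M - 1) (M * 2 ^ N - 1), y j ^ p := by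
    rw [Finset.sum_range_add_sum_Ico _ (by
      have : M ≤ M * 2 ^ N := Nat.le_mul_of_pos_right M (by positivity)
      omega)]
  have hmain : ∑ j ∈ range N, y j ^ p ≤ ∑ j ∈ range (M * 2 ^ N - 1), y j ^ p := by
    apply Finset.sum_le_sum_of_subset_of_nonneg
    · exact Finset.range_subset_range.mpr hcover
    · intro j _ _
      exact Real.rpow_nonneg (hy0 j) p
  have hgeom := jamesonGeomAux (le_of_lt hr0) hr1 N
  have hconst : 2 + (1 - r)⁻¹ = (3 * R - 2) / (R - 1) := by
    have hRne : R ≠ 0 := ne_of_gt (lt_trans one_pos hR1)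
    have hR1ne : R - 1 ≠ 0 := ne_of_gt (by linarith)
    have h1r : 1 - r ≠ 0 := ne_of_gt (by linarith)
    rw [hr]
    field_simp
    ring
  have hApos : (0:ℝ) < A ^ (p - 1) := Real.rpow_pos_of_pos hA _
  calc ∑ j ∈ range N, y j ^ p ≤ ∑ j ∈ range (M * 2 ^ N - 1), y j ^ p := hmain
    _ = ∑ j ∈ range (M - 1), y j ^ p + ∑ j ∈ Ico (M - 1) (M * 2 ^ N - 1), y j ^ p := hsplit
    _ ≤ 2 * S * A ^ (p - 1) + (∑ k ∈ range N, r ^ k) * (A ^ (p - 1) * S) :=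
        add_le_add head (tail N)
    _ ≤ 2 * S * A ^ (p - 1) + (1 - r)⁻¹ * (A ^ (p - 1) * S) := by
        apply add_le_add_right
        apply mul_le_mul_of_nonneg_right hgeom
        positivity
    _ = (2 + (1 - r)⁻¹) * A ^ (p - 1) * S := by ring
    _ = (3 * R - 2) / (R - 1) * A ^ (p - 1) * S := by rw [hconst]

/-- Jameson's inequality relating the ℓ_p-, sup- and first Schreier norms,
with K_p = (3·2^(p-1) - 2)/(2^(p-1) - 1); the value ∞ is allowed on both sides. -/
theorem jameson_inequality (p : ℝ) (hp : 1 < p) (x : ℕ → ℝ) (hx0 : x 0 = 0) :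
    lpPow p x ≤
      ENNReal.ofReal ((3 * (2 : ℝ) ^ (p - 1) - 2) / ((2 : ℝ) ^ (p - 1) - 1)) *
        supNormE x ^ (p - 1) * s1NormE x := by
  have hq : 0 < p - 1 := by linarith
  have hp0 : 0 < p := by linarith
  set Kc : ℝ := (3 * (2 : ℝ) ^ (p - 1) - 2) / ((2 : ℝ) ^ (p - 1) - 1) with hKc
  have hR1 : 1 < (2:ℝ) ^ (p - 1) := by
    rw [Real.one_lt_rpow_iff_of_pos (by norm_num)]
    exact Or.inl ⟨one_lt_two, hq⟩
  have hKpos : 0 < Kc := by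
    rw [hKc]
    apply div_pos <;> linarith
  -- case x = 0 handled via supNormE = 0
  by_cases hsup0 : supNormE x = 0
  · have hx : ∀ n, x n = 0 := by
      intro n
      have h1 : ENNReal.ofReal |x n| ≤ supNormE x := le_iSup (fun n => ENNReal.ofReal |x n|) n
      rw [hsup0, le_zero_iff, ENNReal.ofReal_eq_zero] at h1
      have := abs_nonneg (x n)
      have : |x n| = 0 := le_antisymm h1 this
      exact abs_eq_zero.mp this
    have : lpPow p x = 0 := by
      rw [lpPow]
      convert tsum_zero with n
      rw [hx n, abs_zero, Real.zero_rpow (ne_of_gt hp0), ENNReal.ofReal_zero]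
    rw [this]
    exact zero_le
  -- supNormE ≤ s1NormE
  have hsup_le : supNormE x ≤ s1NormE x := by
    rw [supNormE]
    apply iSup_le
    intro n
    cases n with
    | zero => rw [hx0, abs_zero, ENNReal.ofReal_zero]; exact zero_le
    | succ n =>
      have hmem : ({n + 1} : Finset ℕ) ∈ {F : Finset ℕ | IsSchreier F ∧ F.Nonempty} := by
        constructor
        · intro h
          rw [Finset.card_singleton, Finset.min'_singleton]
          omega
        · exact Finset.singleton_nonempty _
      have := le_iSup₂ (f := fun (F : Finset ℕ)
          (_ : F ∈ {F : Finset ℕ | IsSchreier F ∧ F.Nonempty}) =>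
          ENNReal.ofReal (∑ k ∈ F, |x k|)) ({n+1} : Finset ℕ) hmem
      simpa [s1NormE] using this
  by_cases hstop : s1NormE x = ⊤
  · rw [hstop]
    have h1 : supNormE x ^ (p - 1) ≠ 0 := by
      by_cases htop : supNormE x = ⊤
      · rw [htop, ENNReal.top_rpow_of_pos hq]
        exact ENNReal.top_ne_zero
      · exact ne_of_gt (ENNReal.rpow_pos (pos_iff_ne_zero.mpr hsup0) htop)
    have h2 : ENNReal.ofReal Kc * supNormE x ^ (p - 1) ≠ 0 :=
      mul_ne_zero (by simp [ENNReal.ofReal_eq_zero]; linarith) h1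
    rw [ENNReal.mul_top h2]
    exact le_top
  -- main case
  have hsuptop : supNormE x ≠ ⊤ := by
    intro h
    rw [h] at hsup_le
    exact hstop (top_le_iff.mp hsup_le)
  set A : ℝ := (supNormE x).toReal with hA
  set S : ℝ := (s1NormE x).toReal with hS
  have hApos : 0 < A := ENNReal.toReal_pos hsup0 hsuptop
  have hS0 : 0 ≤ S := ENNReal.toReal_nonneg
  have hAS : A ≤ S := ENNReal.toReal_mono hstop hsup_le
  have hxA : ∀ n, |x n| ≤ A := by
    intro n
    have h1 : ENNReal.ofReal |x n| ≤ supNormE x := le_iSup (fun n => ENNReal.ofReal |x n|) n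
    rw [← ENNReal.ofReal_toReal hsuptop, ← hA] at h1
    exact (ENNReal.ofReal_le_ofReal_iff (le_of_lt hApos)).mp h1
  have hSch : ∀ F : Finset ℕ, IsSchreier F → F.Nonempty → ∑ n ∈ F, |x n| ≤ S := by
    intro F h1 h2
    have h3 : ENNReal.ofReal (∑ n ∈ F, |x n|) ≤ s1NormE x :=
      le_iSup₂ (f := fun (F : Finset ℕ)
          (_ : F ∈ {F : Finset ℕ | IsSchreier F ∧ F.Nonempty}) =>
          ENNReal.ofReal (∑ k ∈ F, |x k|)) F ⟨h1, h2⟩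
    rw [← ENNReal.ofReal_toReal hstop, ← hS] at h3
    exact (ENNReal.ofReal_le_ofReal_iff hS0).mp h3
  -- real estimate for partial sums
  have hreal : ∀ n : ℕ, ∑ k ∈ range n, |x k| ^ p ≤ Kc * A ^ (p - 1) * S := by
    intro n
    have hrhs0 : 0 ≤ Kc * A ^ (p - 1) * S := by positivity
    cases n with
    | zero => simpa using hrhs0
    | succ n' =>
      rw [Finset.sum_range_succ']
      rw [hx0, abs_zero, Real.zero_rpow (ne_of_gt hp0), add_zero]
      obtain ⟨y, hy0, hanti, hvals, hblocks, hsums⟩ := jamesonRearrange x n' S hS0 hSch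
      have hyA : ∀ j, y j ≤ A := by
        intro j
        rcases hvals j with h | ⟨m, hm⟩
        · rw [h]; exact le_of_lt hApos
        · rw [hm]; exact hxA m
      rw [← hsums p]
      exact jamesonKey hp hApos hAS hy0 hyA hanti hblocks n'
  -- pass to ℝ≥0∞
  have hlhs : lpPow p x ≤ ENNReal.ofReal (Kc * A ^ (p - 1) * S) := by
    rw [lpPow, ENNReal.tsum_eq_iSup_nat]
    apply iSup_le
    intro n
    rw [← ENNReal.ofReal_sum_of_nonneg (fun i _ => Real.rpow_nonneg (abs_nonneg _) p)]
    exact ENNReal.ofReal_le_ofReal (hreal n)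
  refine le_trans hlhs ?_
  have hrw : ENNReal.ofReal (Kc * A ^ (p - 1) * S) =
      ENNReal.ofReal Kc * ENNReal.ofReal A ^ (p - 1) * ENNReal.ofReal S := by
    rw [ENNReal.ofReal_mul (by positivity), ENNReal.ofReal_mul (le_of_lt hKpos)]
    rw [ENNReal.ofReal_rpow_of_pos hApos]
  rw [hrw, ← ENNReal.ofReal_toReal hsuptop, ← ENNReal.ofReal_toReal hstop, ← hA, ← hS]
end

section
/- The constant K_p = (3·2^{p−1} − 2)/(2^{p−1} − 1) in Jameson's inequality cannot be improved below (2^p − 1)/(2^{p−1} − 1): for every ε > 0 there exists a sequence x with ‖x‖_{S_1} = 1, ‖x‖_∞ > 0, and ‖x‖_{ℓ_p}^p > ((2^p − 1)/(2^{p−1} − 1) − ε) ‖x‖_∞^{p−1}. Concretely, for each k ∈ ℕ the sequence x with x(j) = 2^{−k} for 1 ≤ j < 2^{k+1} and x(j) = 2^{−n} for 2^n ≤ j < 2^{n+1}, n > k, satisfies ‖x‖_{S_1} = 1, ‖x‖_∞ = 2^{−k}, and ‖x‖_{ℓ_p}^p / ‖x‖_∞^{p−1} = 2 − 2^{−k}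 + 1/(2^{p−1}−1). -/
open Finset Filter

open ENNReal

/-- The explicit sequence witnessing optimality of Jameson's constant:
x(j) = 2^(-k) for 1 ≤ j < 2^(k+1) and x(j) = 2^(-n) for 2^n ≤ j < 2^(n+1), n > k. -/
noncomputable def jamesonSeq (k : ℕ) : ℕ → ℝ :=
  fun j => if j = 0 then 0 else ((2 : ℝ) ^ (max k (Nat.log 2 j)))⁻¹

lemma jam_nonneg (k j : ℕ) : 0 ≤ jamesonSeq k j := by
  unfold jamesonSeq; split <;> positivity

lemma jam_abs (k j : ℕ) : |jamesonSeq k j| = jamesonSeq k j := abs_of_nonneg (jam_nonneg k j)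

lemma jam_apply (k : ℕ) {j : ℕ} (hj : j ≠ 0) :
    jamesonSeq k j = ((2:ℝ) ^ (max k (Nat.log 2 j)))⁻¹ := if_neg hj

lemma jam_le (k j : ℕ) : jamesonSeq k j ≤ ((2:ℝ)^k)⁻¹ := by
  unfold jamesonSeq; split
  · positivity
  · gcongr
    · norm_num
    · exact le_max_left _ _

lemma jam_block {n j : ℕ} (k : ℕ) (h1 : 2^n ≤ j) (h2 : j < 2^(n+1)) :
    jamesonSeq k j = ((2:ℝ) ^ (max k n))⁻¹ := by
  have hj : j ≠ 0 := by have := Nat.one_le_two_pow.trans h1; omega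
  rw [jam_apply k hj, Nat.log_eq_of_pow_le_of_lt_pow h1 h2]

lemma jam_sum_le (k : ℕ) {F : Finset ℕ} (hF : IsSchreier F) (h : F.Nonempty) :
    ∑ j ∈ F, jamesonSeq k j ≤ 1 := by
  classical
  set m := F.min' h with hm
  have hcard : F.card ≤ m := hF h
  have hm1 : 1 ≤ m := le_trans (Finset.card_pos.mpr h) hcard
  set N := max k (Nat.log 2 m) with hN
  have hmN : m < 2^(N+1) :=
    lt_of_lt_of_le (Nat.lt_pow_succ_log_self one_lt_two m)
      (Nat.pow_le_pow_right (by norm_num) (Nat.succ_le_succ (le_max_right _ _)))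
  have hmem : ∀ j ∈ F, m ≤ j := fun j hj => F.min'_le j hj
  have hb1 : ∀ j ∈ F, jamesonSeq k j ≤ ((2:ℝ)^N)⁻¹ := by
    intro j hj
    have hj0 : j ≠ 0 := by have := hmem j hj; omega
    rw [jam_apply k hj0]
    gcongr
    · norm_num
    · exact max_le (le_max_left _ _)
        ((le_max_right k _).trans (max_le_max le_rfl (Nat.log_mono_right (hmem j hj))))
  have hb2 : ∀ j ∈ F, 2^(N+1) ≤ j → jamesonSeq k j ≤ ((2:ℝ)^(N+1))⁻¹ := by
    intro j hj hbig
    have hj0 : j ≠ 0 := by have := Nat.one_le_two_pow.trans hbig; omega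
    rw [jam_apply k hj0]
    gcongr
    · norm_num
    · exact le_max_of_le_right ((Nat.le_log_iff_pow_le one_lt_two hj0).mpr hbig)
  set F1 := F.filter (fun j => j < 2^(N+1)) with hF1
  set F2 := F.filter (fun j => ¬ j < 2^(N+1)) with hF2
  have hcards : F1.card + F2.card = F.card := Finset.card_filter_add_card_filter_not _
  have hF1card : F1.card ≤ 2^(N+1) - m := by
    have hsub : F1 ⊆ Finset.Ico m (2^(N+1)) := by
      intro j hj
      rw [hF1, Finset.mem_filter] at hj
      exact Finset.mem_Ico.mpr ⟨hmem j hj.1, hj.2⟩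
    simpa [Nat.card_Ico] using Finset.card_le_card hsub
  have key : 2 * F1.card + F2.card ≤ 2^(N+1) := by omega
  have hsum1 : ∑ j ∈ F1, jamesonSeq k j ≤ (F1.card : ℝ) * ((2:ℝ)^N)⁻¹ := by
    have := Finset.sum_le_card_nsmul F1 (jamesonSeq k) (((2:ℝ)^N)⁻¹)
      (fun j hj => hb1 j (Finset.mem_filter.mp hj).1)
    simpa [nsmul_eq_mul] using this
  have hsum2 : ∑ j ∈ F2, jamesonSeq k j ≤ (F2.card : ℝ) * ((2:ℝ)^(N+1))⁻¹ := by
    have := Finset.sum_le_card_nsmul F2 (jamesonSeq k) (((2:ℝ)^(N+1))⁻¹)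
      (fun j hj => hb2 j (Finset.mem_filter.mp hj).1 (by have := (Finset.mem_filter.mp hj).2; omega))
    simpa [nsmul_eq_mul] using this
  calc ∑ j ∈ F, jamesonSeq k j
      = ∑ j ∈ F1, jamesonSeq k j + ∑ j ∈ F2, jamesonSeq k j :=
        (Finset.sum_filter_add_sum_filter_not F _ _).symm
    _ ≤ (F1.card : ℝ) * ((2:ℝ)^N)⁻¹ + (F2.card : ℝ) * ((2:ℝ)^(N+1))⁻¹ := add_le_add hsum1 hsum2
    _ = ((2 * F1.card + F2.card : ℕ) : ℝ) * ((2:ℝ)^(N+1))⁻¹ := by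
        push_cast
        rw [pow_succ]
        field_simp
    _ ≤ ((2:ℝ)^(N+1)) * ((2:ℝ)^(N+1))⁻¹ := by
        gcongr
        exact_mod_cast key.trans_eq (by push_cast; ring)
    _ = 1 := mul_inv_cancel₀ (by positivity)

lemma jam_sup (k : ℕ) : supNormE (jamesonSeq k) = ENNReal.ofReal (((2:ℝ)^k)⁻¹) := by
  unfold supNormE
  apply le_antisymm
  · exact iSup_le fun j => ENNReal.ofReal_le_ofReal (by rw [jam_abs]; exact jam_le k j)
  · have h1 : jamesonSeq k 1 = ((2:ℝ)^k)⁻¹ := by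
      rw [jam_apply k one_ne_zero, Nat.log_one_right, max_eq_left (Nat.zero_le k)]
    calc ENNReal.ofReal ((2:ℝ)^k)⁻¹ = ENNReal.ofReal |jamesonSeq k 1| := by rw [jam_abs, h1]
      _ ≤ ⨆ j, ENNReal.ofReal |jamesonSeq k j| := le_iSup (fun j => ENNReal.ofReal |jamesonSeq k j|) 1

lemma Ico_pow_schreier (a : ℕ) (ha : 0 < a) : IsSchreier (Finset.Ico a (2*a)) ∧
    (Finset.Ico a (2*a)).Nonempty ∧
    ∀ h, (Finset.Ico a (2*a)).min' h = a := by
  have hne : (Finset.Ico a (2*a)).Nonempty := by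
    rw [Finset.nonempty_Ico]; omega
  have hmin : ∀ h, (Finset.Ico a (2*a)).min' h = a := by
    intro h
    apply le_antisymm
    · exact Finset.min'_le _ a (Finset.mem_Ico.mpr ⟨le_rfl, by omega⟩)
    · exact Finset.le_min' _ _ _ (fun y hy => (Finset.mem_Ico.mp hy).1)
  refine ⟨fun h => ?_, hne, hmin⟩
  rw [hmin h, Nat.card_Ico]; omega

lemma jam_s1 (k : ℕ) : s1NormE (jamesonSeq k) = 1 := by
  unfold s1NormE
  apply le_antisymm
  · apply iSup₂_le
    rintro F ⟨hF, hne⟩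
    simp only [jam_abs]
    exact ENNReal.ofReal_le_one.mpr (jam_sum_le k hF hne)
  · set a := 2^(k+1) with ha
    have ha0 : 0 < a := Nat.pow_pos (by norm_num)
    obtain ⟨hSch, hne, hmin⟩ := Ico_pow_schreier a ha0
    have hval : ∀ j ∈ Finset.Ico a (2*a), |jamesonSeq k j| = ((2:ℝ)^(k+1))⁻¹ := by
      intro j hj
      rw [Finset.mem_Ico] at hj
      rw [jam_abs, jam_block k (n := k+1) hj.1 (by rw [pow_succ 2 (k+1)]; omega),
        max_eq_right (Nat.le_succ k)]
    have hsum : ∑ j ∈ Finset.Ico a (2*a), |jamesonSeq k j| = 1 := by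
      rw [Finset.sum_congr rfl hval, Finset.sum_const, Nat.card_Ico, nsmul_eq_mul]
      have : 2*a - a = 2^(k+1) := by omega
      rw [this]
      push_cast
      rw [mul_inv_cancel₀ (by positivity)]
    refine le_trans ?_ (le_iSup₂ (f := fun F _ => ENNReal.ofReal (∑ n ∈ F, |jamesonSeq k n|))
      (Finset.Ico a (2*a)) ⟨hSch, hne⟩)
    rw [hsum, ENNReal.ofReal_one]

open Topology

lemma two_pow_inv (m : ℕ) : ((2:ℝ)^m)⁻¹ = (2:ℝ) ^ (-(m:ℝ)) := by
  rw [← Real.rpow_natCast 2 m, ← Real.rpow_neg (by norm_num)]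

lemma calc1 (p : ℝ) (m : ℕ) :
    ((2:ℝ)^m : ℝ) * (((2:ℝ)^m)⁻¹) ^ p = ((2:ℝ)^(1-p) : ℝ) ^ m := by
  rw [two_pow_inv, ← Real.rpow_natCast 2 m, ← Real.rpow_mul (by norm_num),
    ← Real.rpow_add (by norm_num), ← Real.rpow_natCast ((2:ℝ)^(1-p)) m,
    ← Real.rpow_mul (by norm_num)]
  congr 1
  ring

lemma final_alg (p : ℝ) (hp : 1 < p) (k : ℕ) :
    ((2:ℝ)^(k+1) - 1) * (((2:ℝ)^k)⁻¹) ^ p + ((2:ℝ)^(1-p)) ^ (k+1) / (1 - (2:ℝ)^(1-p))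
      = (2 - ((2:ℝ)^k)⁻¹ + 1 / ((2:ℝ)^(p-1) - 1)) * (((2:ℝ)^k)⁻¹) ^ (p-1) := by
  have hD1 : 1 < (2:ℝ)^(p-1) :=
    (Real.one_lt_rpow_iff_of_pos two_pos).mpr (Or.inl ⟨one_lt_two, by linarith⟩)
  set D := (2:ℝ)^(p-1) with hD
  have hrD : (2:ℝ)^(1-p) = D⁻¹ := by
    rw [show (1-p) = -(p-1) by ring, Real.rpow_neg (by norm_num)]
  set t := ((2:ℝ)^k : ℝ)⁻¹ with ht
  have ht0 : 0 < t := by positivity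
  have hkey : t ^ p = t ^ (p-1) * t := by
    have h := Real.rpow_add ht0 (p-1) 1
    rw [sub_add_cancel, Real.rpow_one] at h
    exact h
  have htp : t ^ (p-1) = (2:ℝ) ^ (-(k:ℝ)*(p-1)) := by
    rw [ht, two_pow_inv, ← Real.rpow_mul (by norm_num)]
  have hr1 : ((2:ℝ)^(1-p)) ^ (k+1) = t ^ (p-1) * D⁻¹ := by
    rw [htp, ← hrD, ← Real.rpow_natCast ((2:ℝ)^(1-p)) (k+1),
      ← Real.rpow_mul (by norm_num), ← Real.rpow_add (by norm_num)]
    congr 1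
    push_cast
    ring
  have hDm1 : D - 1 ≠ 0 := by linarith
  have hD0 : (0:ℝ) < D := by linarith
  have h3 : D⁻¹ / (1 - D⁻¹) = 1/(D-1) := by
    have he : 1 - D⁻¹ = (D-1)/D := by field_simp
    rw [he, div_div_eq_mul_div, inv_mul_cancel₀ (ne_of_gt hD0)]
  have h2 : ((2:ℝ)^(k+1)) * t = 2 := by
    rw [ht, pow_succ]
    field_simp
  rw [hkey, hr1, hrD, mul_div_assoc, h3,
    show (2 - t + 1/(D-1)) = ((2:ℝ)^(k+1)) * t - t + 1/(D-1) by rw [h2]]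
  ring

lemma jam_lp (p : ℝ) (hp : 1 < p) (k : ℕ) :
    lpPow p (jamesonSeq k) = ENNReal.ofReal
      ((2 - ((2:ℝ)^k)⁻¹ + 1 / ((2:ℝ)^(p-1) - 1)) * (((2:ℝ)^k)⁻¹) ^ (p-1)) := by
  classical
  set g : ℕ → ℝ := fun j => |jamesonSeq k j| ^ p with hg
  have hgnn : ∀ j, 0 ≤ g j := fun j => Real.rpow_nonneg (abs_nonneg _) p
  have hp0 : p ≠ 0 := by linarith
  have hg0 : g 0 = 0 := by
    simp [hg, jamesonSeq, Real.zero_rpow hp0]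
  set r : ℝ := (2:ℝ)^(1-p) with hr
  have hr0 : 0 < r := Real.rpow_pos_of_pos two_pos _
  have hr1 : r < 1 := Real.rpow_lt_one_of_one_lt_of_neg one_lt_two (by linarith)
  set A : ℝ := ((2:ℝ)^(k+1) - 1) * (((2:ℝ)^k)⁻¹) ^ p with hA
  -- base sum
  have hconst : ∀ j, 1 ≤ j → j < 2^(k+1) → g j = (((2:ℝ)^k)⁻¹) ^ p := by
    intro j h1 h2
    have hj0 : j ≠ 0 := by omega
    have hlog : Nat.log 2 j < k + 1 := Nat.log_lt_of_lt_pow hj0 h2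
    rw [hg]
    simp only
    rw [jam_abs, jam_apply k hj0, max_eq_left (by omega)]
  have hconst' : ∀ j ∈ Finset.Ico (0+1) (2^(k+1)), g j = (((2:ℝ)^k)⁻¹) ^ p := by
    intro j hj
    rw [Finset.mem_Ico] at hj
    exact hconst j hj.1 hj.2
  have hbase : ∑ j ∈ Finset.range (2^(k+1)), g j = A :=
    calc ∑ j ∈ Finset.range (2^(k+1)), g j
        = g 0 + ∑ j ∈ Finset.Ico (0+1) (2^(k+1)), g j := by
          rw [Finset.range_eq_Ico]
          exact Finset.sum_eq_sum_Ico_succ_bot (by positivity) g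
      _ = ∑ j ∈ Finset.Ico (0+1) (2^(k+1)), (((2:ℝ)^k)⁻¹) ^ p := by
          rw [hg0, zero_add]
          exact Finset.sum_congr rfl hconst'
      _ = A := by
          rw [Finset.sum_const, Nat.card_Ico, nsmul_eq_mul, hA]
          congr 1
          have h1 : 0+1 ≤ 2^(k+1) := Nat.one_le_two_pow
          rw [Nat.cast_sub h1]
          push_cast
          ring
  -- block sums
  have hblocksum : ∀ m, k ≤ m → ∑ j ∈ Finset.Ico (2^m) (2^(m+1)), g j = r ^ m := by
    intro m hm
    have hval : ∀ j ∈ Finset.Ico (2^m) (2^(m+1)), g j = (((2:ℝ)^m)⁻¹) ^ p := by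
      intro j hj
      rw [Finset.mem_Ico] at hj
      rw [hg]
      simp only
      rw [jam_abs, jam_block k hj.1 hj.2, max_eq_right hm]
    rw [show (∑ j ∈ Finset.Ico (2^m) (2^(m+1)), g j)
        = ∑ _j ∈ Finset.Ico (2^m) (2^(m+1)), (((2:ℝ)^m)⁻¹) ^ p from Finset.sum_congr rfl hval,
      Finset.sum_const, Nat.card_Ico, nsmul_eq_mul,
      show (2^(m+1) - 2^m : ℕ) = 2^m by rw [pow_succ]; omega]
    push_cast
    exact calc1 p m
  -- closed form for partial sums
  have hS : ∀ N, ∑ j ∈ Finset.range (2^(k+1+N)), g j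
      = A + ∑ n ∈ Finset.Ico (k+1) (k+1+N), r ^ n := by
    intro N
    induction N with
    | zero => simp [hbase]
    | succ N ih =>
      have hle : 2^(k+1+N) ≤ 2^(k+1+N+1) := Nat.pow_le_pow_right (by norm_num) (by omega)
      rw [show k+1+(N+1) = (k+1+N)+1 from rfl, Finset.range_eq_Ico,
        ← Finset.sum_Ico_consecutive g (Nat.zero_le _) hle, ← Finset.range_eq_Ico, ih,
        hblocksum (k+1+N) (by omega), Finset.sum_Ico_succ_top (by omega)]
      ring
  -- limit computations
  have hofsum : ∀ M : ℕ, ∑ j ∈ Finset.range M, ENNReal.ofReal (g j)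
      = ENNReal.ofReal (∑ j ∈ Finset.range M, g j) :=
    fun M => (ENNReal.ofReal_sum_of_nonneg (fun j _ => hgnn j)).symm
  have hadd : Tendsto (fun N : ℕ => k+1+N) atTop atTop := by
    simpa [add_comm] using tendsto_add_atTop_nat (k+1)
  have hmono : Tendsto (fun N : ℕ => 2^(k+1+N)) atTop atTop := by
    have hpow : Tendsto (fun M : ℕ => 2^M) atTop atTop :=
      tendsto_pow_atTop_atTop_of_one_lt (by norm_num)
    exact hpow.comp hadd
  have h1 : Tendsto (fun N => ENNReal.ofReal (∑ j ∈ Finset.range (2^(k+1+N)), g j)) atTop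
      (𝓝 (lpPow p (jamesonSeq k))) := by
    have ht := (ENNReal.tendsto_nat_tsum (fun j => ENNReal.ofReal (g j))).comp hmono
    have : lpPow p (jamesonSeq k) = ∑' j, ENNReal.ofReal (g j) := rfl
    rw [this]
    simpa [Function.comp_def, hofsum] using ht
  have hgeopartial : Tendsto (fun M : ℕ => ∑ n ∈ Finset.range M, r ^ n) atTop
      (𝓝 ((1-r)⁻¹)) := (hasSum_geometric_of_lt_one hr0.le hr1).tendsto_sum_nat
  have hgeo : Tendsto (fun N : ℕ => ∑ n ∈ Finset.Ico (k+1) (k+1+N), r ^ n) atTop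
      (𝓝 (r^(k+1) / (1-r))) := by
    have heq : ∀ N : ℕ, ∑ n ∈ Finset.Ico (k+1) (k+1+N), r ^ n
        = ∑ n ∈ Finset.range (k+1+N), r ^ n - ∑ n ∈ Finset.range (k+1), r ^ n := by
      intro N
      rw [Finset.sum_Ico_eq_sub _ (by omega)]
    have ht : Tendsto (fun N : ℕ => ∑ n ∈ Finset.range (k+1+N), r ^ n
        - ∑ n ∈ Finset.range (k+1), r ^ n) atTop
        (𝓝 ((1-r)⁻¹ - ∑ n ∈ Finset.range (k+1), r ^ n)) :=
      (hgeopartial.comp hadd).sub_const _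
    have hlim : (1-r)⁻¹ - ∑ n ∈ Finset.range (k+1), r ^ n = r^(k+1) / (1-r) := by
      rw [geom_sum_eq (ne_of_lt hr1)]
      have hne : (1:ℝ) - r ≠ 0 := by linarith
      have hne2 : r - 1 ≠ 0 := by linarith
      field_simp
      ring
    rw [← hlim]
    simpa [heq] using ht
  have h2 : Tendsto (fun N => ENNReal.ofReal (∑ j ∈ Finset.range (2^(k+1+N)), g j)) atTop
      (𝓝 (ENNReal.ofReal (A + r^(k+1) / (1-r)))) := by
    have hre : Tendsto (fun N => ∑ j ∈ Finset.range (2^(k+1+N)), g j) atTop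
        (𝓝 (A + r^(k+1)/(1-r))) := by
      simp only [hS]
      exact tendsto_const_nhds.add hgeo
    exact (ENNReal.continuous_ofReal.tendsto _).comp hre
  rw [tendsto_nhds_unique h1 h2]
  congr 1
  rw [hA, hr]
  exact final_alg p hp k

/-- The constant in Jameson's inequality cannot be improved below (2^p-1)/(2^(p-1)-1). -/
theorem jameson_constant_lower_bound (p : ℝ) (hp : 1 < p) :
    (∀ ε : ℝ, 0 < ε → ∃ x : ℕ → ℝ, x 0 = 0 ∧ s1NormE x = 1 ∧ 0 < supNormE x ∧
      ENNReal.ofReal (((2 : ℝ) ^ p - 1) / ((2 : ℝ) ^ (p - 1) - 1) - ε) *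
          supNormE x ^ (p - 1) < lpPow p x) ∧
    ∀ k : ℕ, 1 ≤ k →
      s1NormE (jamesonSeq k) = 1 ∧
      supNormE (jamesonSeq k) = ENNReal.ofReal (((2 : ℝ) ^ k)⁻¹) ∧
      lpPow p (jamesonSeq k) =
        ENNReal.ofReal (2 - ((2 : ℝ) ^ k)⁻¹ + 1 / ((2 : ℝ) ^ (p - 1) - 1)) *
          supNormE (jamesonSeq k) ^ (p - 1) := by
  have hD1 : 1 < (2:ℝ)^(p-1) :=
    (Real.one_lt_rpow_iff_of_pos two_pos).mpr (Or.inl ⟨one_lt_two, by linarith⟩)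
  have hDm1 : (0:ℝ) < (2:ℝ)^(p-1) - 1 := by linarith
  have main : ∀ k : ℕ,
      s1NormE (jamesonSeq k) = 1 ∧
      supNormE (jamesonSeq k) = ENNReal.ofReal (((2 : ℝ) ^ k)⁻¹) ∧
      lpPow p (jamesonSeq k) =
        ENNReal.ofReal (2 - ((2 : ℝ) ^ k)⁻¹ + 1 / ((2 : ℝ) ^ (p - 1) - 1)) *
          supNormE (jamesonSeq k) ^ (p - 1) := by
    intro k
    have ht0 : (0:ℝ) < ((2:ℝ)^k)⁻¹ := by positivity
    have ht1 : ((2:ℝ)^k)⁻¹ ≤ 1 := by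
      rw [inv_le_one_iff₀]
      right
      exact one_le_pow₀ one_le_two
    have hC0 : (0:ℝ) ≤ 2 - ((2:ℝ)^k)⁻¹ + 1 / ((2:ℝ)^(p-1) - 1) := by
      have : (0:ℝ) < 1 / ((2:ℝ)^(p-1) - 1) := by positivity
      linarith
    refine ⟨jam_s1 k, jam_sup k, ?_⟩
    rw [jam_lp p hp k, jam_sup k, ENNReal.ofReal_rpow_of_pos ht0,
      ← ENNReal.ofReal_mul hC0]
  refine ⟨?_, fun k _ => main k⟩
  intro ε hε
  obtain ⟨n, hn⟩ := exists_pow_lt_of_lt_one hε (by norm_num : (1:ℝ)/2 < 1)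
  have hn' : ((2:ℝ)^n)⁻¹ < ε := by
    rwa [one_div, inv_pow] at hn
  set k := n + 1 with hk
  have htlt : ((2:ℝ)^k)⁻¹ < ε := by
    refine lt_of_le_of_lt ?_ hn'
    gcongr
    · norm_num
    · omega
  have ht0 : (0:ℝ) < ((2:ℝ)^k)⁻¹ := by positivity
  obtain ⟨hs1, hsup, hlp⟩ := main k
  refine ⟨jamesonSeq k, by simp [jamesonSeq], hs1, ?_, ?_⟩
  · rw [hsup]
    exact ENNReal.ofReal_pos.mpr ht0
  · rw [hlp, hsup]
    have hfac : (ENNReal.ofReal (((2:ℝ)^k)⁻¹)) ^ (p-1)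
        = ENNReal.ofReal ((((2:ℝ)^k)⁻¹) ^ (p-1)) := ENNReal.ofReal_rpow_of_pos ht0
    have hfac0 : (ENNReal.ofReal (((2:ℝ)^k)⁻¹)) ^ (p-1) ≠ 0 := by
      rw [hfac]
      exact (ENNReal.ofReal_pos.mpr (Real.rpow_pos_of_pos ht0 _)).ne'
    have hfactop : (ENNReal.ofReal (((2:ℝ)^k)⁻¹)) ^ (p-1) ≠ ⊤ := by
      rw [hfac]
      exact ENNReal.ofReal_ne_top
    rw [ENNReal.mul_lt_mul_iff_left hfac0 hfactop]
    have hCk0 : (0:ℝ) < 2 - ((2:ℝ)^k)⁻¹ + 1 / ((2:ℝ)^(p-1) - 1) := by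
      have h1 : ((2:ℝ)^k)⁻¹ ≤ 1 := by
        rw [inv_le_one_iff₀]
        right
        exact one_le_pow₀ one_le_two
      have : (0:ℝ) < 1 / ((2:ℝ)^(p-1) - 1) := by positivity
      linarith
    rw [ENNReal.ofReal_lt_ofReal_iff hCk0]
    have h2p : (2:ℝ)^p = (2:ℝ)^(p-1) * 2 := by
      have h := Real.rpow_add two_pos (p-1) 1
      rw [sub_add_cancel, Real.rpow_one] at h
      exact h
    have hCeq : ((2:ℝ)^p - 1) / ((2:ℝ)^(p-1) - 1) = 2 + 1 / ((2:ℝ)^(p-1) - 1) := by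
      rw [h2p]
      field_simp
      ring
    rw [hCeq]
    linarith
end

section
/- Let M = {m₁ < m₂ < ⋯} be an infinite set of positive integers, let M' = 2M − 1 = {2m − 1 : m ∈ M} and M'' = 2M. If J is a nonempty finite set of indices with M''(J) = {2m_j : j ∈ J} a Schreier set, then τ₁(M(J)) ≤ 2 and τ₁(M'(J)) ≤ 2, where M(J) = {m_j : j ∈ J} and M'(J) = {2m_j − 1 : j ∈ J}. -/
open Finset Filter

lemma tau1_le_two_aux (A : Finset ℕ) (hA : A.Nonempty) (hpos : 0 < A.min' hA)
    (hcard : A.card ≤ 2 * A.min' hA) : tau1 A ≤ 2 := by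
  set k := A.min' hA with hk
  have hkA : k ∈ A := A.min'_mem hA
  set F1 : Finset ℕ := A.filter (· < 2 * k) with hF1
  set F2 : Finset ℕ := insert (2 * k) (A.filter (fun a => 2 * k ≤ a)) with hF2
  have hkF1 : k ∈ F1 := by
    simp only [hF1, mem_filter]
    exact ⟨hkA, by omega⟩
  have hF1ne : F1.Nonempty := ⟨k, hkF1⟩
  have hF2ne : F2.Nonempty := ⟨2 * k, mem_insert_self _ _⟩
  have hF1sub : F1 ⊆ Finset.Icc k (2 * k - 1) := by
    intro a ha
    rw [hF1, mem_filter] at ha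
    rw [Finset.mem_Icc]
    exact ⟨A.min'_le a ha.1, by omega⟩
  have hF1card : F1.card ≤ k := by
    calc F1.card ≤ (Finset.Icc k (2 * k - 1)).card := Finset.card_le_card hF1sub
    _ = k := by rw [Nat.card_Icc]; omega
  have hF2card : F2.card ≤ 2 * k := by
    have heq : A.filter (fun a => ¬ a < 2 * k) = A.filter (fun a => 2 * k ≤ a) := by
      apply Finset.filter_congr; intro x _; simp [not_lt]
    have h1 : F1.card + (A.filter (fun a => 2 * k ≤ a)).card = A.card := by
      rw [hF1, ← heq]
      exact Finset.card_filter_add_card_filter_not (p := fun a => a < 2 * k)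
    have := Finset.card_insert_le (2 * k) (A.filter (fun a => 2 * k ≤ a))
    have h2 : 1 ≤ F1.card := Finset.card_pos.mpr hF1ne
    show (insert (2 * k) (A.filter (fun a => 2 * k ≤ a))).card ≤ 2 * k
    omega
  have hF2min : ∀ b ∈ F2, 2 * k ≤ b := by
    intro b hb
    rw [hF2, mem_insert] at hb
    rcases hb with rfl | hb
    · exact le_rfl
    · exact (mem_filter.mp hb).2
  apply Nat.sInf_le
  refine ⟨[F1, F2], ⟨?_, ?_⟩, rfl, ?_⟩
  · intro F hF
    simp only [List.mem_cons, List.not_mem_nil, or_false] at hF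
    rcases hF with rfl | rfl
    · refine ⟨fun h => ?_, hF1ne⟩
      calc F1.card ≤ k := hF1card
      _ ≤ F1.min' h := Finset.le_min' _ _ _ fun a ha => A.min'_le a (mem_filter.mp ha).1
    · refine ⟨fun h => ?_, hF2ne⟩
      calc F2.card ≤ 2 * k := hF2card
      _ ≤ F2.min' h := Finset.le_min' _ _ _ hF2min
  · refine List.isChain_cons_cons.mpr ⟨?_, List.isChain_singleton _⟩
    intro a ha b hb
    have := hF2min b hb
    have := (mem_filter.mp ha).2
    omega
  · intro a ha
    have : chainUnion [F1, F2] = F1 ∪ (F2 ∪ ∅) := rfl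
    rw [this]
    simp only [mem_union, notMem_empty, or_false]
    by_cases h : a < 2 * k
    · exact Or.inl (mem_filter.mpr ⟨ha, h⟩)
    · exact Or.inr (mem_insert_of_mem (mem_filter.mpr ⟨ha, by omega⟩))

/-- If M''(J) = {2m_j : j ∈ J} is a Schreier set, then τ₁(M(J)) ≤ 2 and τ₁(M'(J)) ≤ 2. -/
theorem tau1_le_two_of_double_schreier (M : Set ℕ) (hM : M.Infinite)
    (hMpos : ∀ m ∈ M, 0 < m) (J : Finset ℕ) (hJ : J.Nonempty)
    (hS : IsSchreier (J.image fun j => 2 * enumSet M j)) :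
    tau1 (J.image (enumSet M)) ≤ 2 ∧
      tau1 (J.image fun j => 2 * enumSet M j - 1) ≤ 2 := by
  set e := enumSet M with he
  have hmono : StrictMono e := Nat.nth_strictMono hM
  have hmem : ∀ n, e n ∈ M := fun n => Nat.nth_mem_of_infinite hM n
  have hepos : ∀ n, 0 < e n := fun n => hMpos _ (hmem n)
  set j0 := J.min' hJ with hj0
  have hSne : (J.image fun j => 2 * e j).Nonempty := hJ.image _
  have hmono2 : StrictMono (fun j => 2 * e j) := fun a b h => by
    show 2 * e a < 2 * e b
    have := hmono h; omega
  have hJcard : J.card ≤ 2 * e j0 := by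
    have h := hS hSne
    rw [Finset.card_image_of_injective _ hmono2.injective,
      Finset.min'_image hmono2.monotone] at h
    exact h
  have hpos0 : 0 < e j0 := hepos j0
  constructor
  · have hne : (J.image e).Nonempty := hJ.image _
    have hmin1 : (J.image e).min' hne = e j0 := by
      rw [Finset.min'_image hmono.monotone]
    apply tau1_le_two_aux _ hne
    · rw [hmin1]; exact hpos0
    · rw [hmin1, Finset.card_image_of_injective _ hmono.injective]
      exact hJcard
  · have hmono3 : StrictMono (fun j => 2 * e j - 1) := fun a b h => by
      show 2 * e a - 1 < 2 * e b - 1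
      have := hmono h; have := hepos a; have := hepos b; omega
    have hne : (J.image fun j => 2 * e j - 1).Nonempty := hJ.image _
    have hmin3 : (J.image fun j => 2 * e j - 1).min' hne = 2 * e j0 - 1 := by
      rw [Finset.min'_image hmono3.monotone]
    apply tau1_le_two_aux _ hne
    · rw [hmin3]; omega
    · rw [hmin3, Finset.card_image_of_injective _ hmono3.injective]
      omega
end

section
/- There exists a partition of the positive integers into finite successive intervals G₁ < F₂ < G₂ < F₃ < G₃ < ⋯ (with F₁ = ∅) such that for each n, Gₙ is the union of n successive maximal Schreier sets, and |Fₙ| = Σ_{m=1}^{n−1}(|F_m| + |G_m|) for each n ≥ 2. -/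
open Finset Filter

def stMPB : ℕ → ℕ
  | 0 => 1
  | n+1 => 2^(n+1) * stMPB n - 1

lemma stMPB_pos (n : ℕ) : 1 ≤ stMPB n := by
  induction n with
  | zero => simp [stMPB]
  | succ k ih =>
    have h2 : 2 ≤ 2^(k+1) := by
      have := Nat.one_lt_two_pow_iff (n := k+1)
      omega
    have : 2 * stMPB k ≤ 2^(k+1) * stMPB k := Nat.mul_le_mul_right _ h2
    simp only [stMPB]; omega

def Gmpb (n : ℕ) : Finset ℕ := Finset.Icc (stMPB n) (2^n * stMPB n - 1)

def Fmpb (n : ℕ) : Finset ℕ :=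
  if n ≤ 1 then ∅ else Finset.Icc (2^(n-1) * stMPB (n-1)) (stMPB n - 1)

lemma Icc_min'_eq (a b : ℕ) (h : (Finset.Icc a b).Nonempty) :
    (Finset.Icc a b).min' h = a := by
  have hab : a ≤ b := (Finset.nonempty_Icc).mp h
  refine le_antisymm (Finset.min'_le _ _ (Finset.mem_Icc.mpr ⟨le_rfl, hab⟩)) ?_
  exact Finset.le_min' _ _ _ fun y hy => (Finset.mem_Icc.mp hy).1

lemma stMPB_succ (n : ℕ) : stMPB (n+1) = 2^(n+1) * stMPB n - 1 := rfl

lemma two_pow_mul_ge (n : ℕ) (hn : 1 ≤ n) : stMPB n + 1 ≤ 2^n * stMPB n := by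
  have h2 : 2 ≤ 2^n := by
    have := Nat.one_lt_two_pow_iff (n := n); omega
  have := Nat.mul_le_mul_right (stMPB n) h2
  have := stMPB_pos n
  omega

lemma card_Gmpb (n : ℕ) (hn : 1 ≤ n) : (Gmpb n).card = 2^n * stMPB n - stMPB n := by
  have h := two_pow_mul_ge n hn
  have hp := stMPB_pos n
  rw [Gmpb, Nat.card_Icc]; omega

lemma Fmpb_eq (n : ℕ) (hn : 2 ≤ n) :
    Fmpb n = Finset.Icc (2^(n-1) * stMPB (n-1)) (stMPB n - 1) := by
  rw [Fmpb, if_neg (by omega)]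

lemma st_lt (n : ℕ) (hn : 1 ≤ n) : stMPB n = 2^n * stMPB (n-1) - 1 := by
  obtain ⟨k, rfl⟩ : ∃ k, n = k + 1 := ⟨n - 1, by omega⟩
  simp [stMPB_succ]

lemma card_Fmpb (n : ℕ) (hn : 2 ≤ n) : (Fmpb n).card = 2^(n-1) * stMPB (n-1) - 1 := by
  rw [Fmpb_eq n hn, Nat.card_Icc]
  have h1 := st_lt n (by omega)
  have hp := stMPB_pos n
  have hp' := stMPB_pos (n-1)
  have hpow : 2^n = 2 * 2^(n-1) := by
    rw [← pow_succ']
    congr 1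
    omega
  have h2 : 1 ≤ 2^(n-1) * stMPB (n-1) := Nat.one_le_iff_ne_zero.mpr (by positivity)
  have h1' : stMPB n = 2 * (2^(n-1) * stMPB (n-1)) - 1 := by rw [h1, hpow, mul_assoc]
  omega

lemma sum_card (n : ℕ) (hn : 2 ≤ n) :
    ∑ m ∈ Finset.Ico 1 n, ((Fmpb m).card + (Gmpb m).card) = 2^(n-1) * stMPB (n-1) - 1 := by
  induction n with
  | zero => omega
  | succ k ih =>
    rcases Nat.lt_or_ge k 2 with hk | hk
    · interval_cases k
      · omega
      · simp [Fmpb, Gmpb, stMPB]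
    · rw [Finset.sum_Ico_succ_top (by omega), ih hk]
      have hF := card_Fmpb k hk
      have hG := card_Gmpb k (by omega)
      have h1 := st_lt k (by omega)
      have hp := stMPB_pos k
      have hp' := stMPB_pos (k-1)
      have hpow : 2^k = 2 * 2^(k-1) := by rw [← pow_succ']; congr 1; omega
      have h2 : 1 ≤ 2^(k-1) * stMPB (k-1) := Nat.one_le_iff_ne_zero.mpr (by positivity)
      have h3 := two_pow_mul_ge k (by omega)
      have h1' : stMPB k = 2 * (2^(k-1) * stMPB (k-1)) - 1 := by rw [h1, hpow, mul_assoc]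
      simp only [Nat.add_sub_cancel]
      omega

lemma exists_block (s : ℕ) (hs : 1 ≤ s) :
    ∀ m x, s ≤ x → x ≤ 2^m * s - 1 → ∃ i < m, 2^i * s ≤ x ∧ x ≤ 2^(i+1) * s - 1 := by
  intro m
  induction m with
  | zero => intro x h1 h2; simp at h2; omega
  | succ k ih =>
    intro x h1 h2
    rcases Nat.lt_or_ge x (2^k * s) with hx | hx
    · obtain ⟨i, hi, h3, h4⟩ := ih x h1 (by omega)
      exact ⟨i, by omega, h3, h4⟩
    · exact ⟨k, by omega, hx, h2⟩

lemma Gmpb_decomp (n : ℕ) (hn : 1 ≤ n) :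
    ∃ H : Fin n → Finset ℕ, (∀ i, IsMaxSchreier (H i)) ∧
      (∀ i j : Fin n, i < j → ∀ a ∈ H i, ∀ b ∈ H j, a < b) ∧
      Gmpb n = Finset.univ.biUnion H := by
  have hp := stMPB_pos n
  set s := stMPB n with hs
  refine ⟨fun i => Finset.Icc (2^(i:ℕ) * s) (2^((i:ℕ)+1) * s - 1), ?_, ?_, ?_⟩
  · intro i
    have h1 : 1 ≤ 2^(i:ℕ) * s := Nat.one_le_iff_ne_zero.mpr (by positivity)
    have h2 : 2^((i:ℕ)+1) * s = 2 * (2^(i:ℕ) * s) := by rw [pow_succ']; ring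
    have hle : 2^(i:ℕ) * s ≤ 2^((i:ℕ)+1) * s - 1 := by omega
    have hne : (Finset.Icc (2^(i:ℕ) * s) (2^((i:ℕ)+1) * s - 1)).Nonempty :=
      Finset.nonempty_Icc.mpr hle
    refine ⟨hne, ?_⟩
    rw [Nat.card_Icc, Icc_min'_eq _ _ hne]
    omega
  · intro i j hij a ha b hb
    rw [Finset.mem_Icc] at ha hb
    have : (2^((i:ℕ)+1) : ℕ) ≤ 2^(j:ℕ) := Nat.pow_le_pow_right (by omega) (by omega)
    have := Nat.mul_le_mul_right s this
    have h1 : 1 ≤ 2^(j:ℕ) * s := Nat.one_le_iff_ne_zero.mpr (by positivity)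
    omega
  · ext x
    simp only [Gmpb, Finset.mem_Icc, Finset.mem_biUnion, Finset.mem_univ, true_and]
    constructor
    · rintro ⟨h1, h2⟩
      obtain ⟨i, hi, h3, h4⟩ := exists_block s hp n x h1 h2
      exact ⟨⟨i, hi⟩, h3, h4⟩
    · rintro ⟨i, hx⟩
      have hl : (1:ℕ) ≤ 2^(i:ℕ) := Nat.one_le_two_pow
      have hl' := Nat.mul_le_mul_right s hl
      have : (2^((i:ℕ)+1) : ℕ) ≤ 2^n := Nat.pow_le_pow_right (by omega) (by omega)
      have := Nat.mul_le_mul_right s this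
      rw [← hs]
      omega

lemma cover_aux : ∀ n, 1 ≤ n → ∀ m, 1 ≤ m → m ≤ 2^n * stMPB n - 1 →
    ∃ k, 1 ≤ k ∧ m ∈ Fmpb k ∪ Gmpb k := by
  intro n
  induction n with
  | zero => omega
  | succ j ih =>
    intro _ m hm hm2
    rcases Nat.lt_or_ge j 1 with hj | hj
    · interval_cases j
      refine ⟨1, le_rfl, ?_⟩
      have : m = 1 := by simp [stMPB] at hm2; omega
      simp [this, Gmpb, stMPB]
    · rcases le_or_gt m (2^j * stMPB j - 1) with h | h
      · exact ih hj m hm h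
      · have hp := stMPB_pos j
        have hp2 := stMPB_pos (j+1)
        have hst : stMPB (j+1) = 2^(j+1) * stMPB j - 1 := rfl
        have hpow : (2:ℕ)^(j+1) = 2 * 2^j := by rw [pow_succ']
        have h1 : 1 ≤ 2^j * stMPB j := Nat.one_le_iff_ne_zero.mpr (by positivity)
        have h1' : 2^(j+1) * stMPB j = 2 * (2^j * stMPB j) := by rw [hpow]; ring
        rcases le_or_gt m (stMPB (j+1) - 1) with h2 | h2
        · refine ⟨j+1, by omega, Finset.mem_union_left _ ?_⟩
          rw [Fmpb_eq (j+1) (by omega)]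
          simp only [Nat.add_sub_cancel]
          rw [Finset.mem_Icc]
          omega
        · refine ⟨j+1, by omega, Finset.mem_union_right _ ?_⟩
          have h3 := two_pow_mul_ge (j+1) (by omega)
          rw [Gmpb, Finset.mem_Icc]
          omega

/-- The Manoussakis–Pelczar-Barwacz construction: a partition of the positive integers
into finite successive intervals G₁ < F₂ < G₂ < F₃ < ⋯ (F₁ = ∅) with Gₙ a union of n
successive maximal Schreier sets and |Fₙ| = Σ_{m<n}(|F_m| + |G_m|). -/
theorem mpb_construction :
    ∃ F G : ℕ → Finset ℕ,
      F 1 = ∅ ∧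
      (∀ n, 1 ≤ n → (∃ a b, F n = Finset.Icc a b) ∧ ∃ a b, G n = Finset.Icc a b) ∧
      (∀ n, 1 ≤ n → ∃ H : Fin n → Finset ℕ, (∀ i, IsMaxSchreier (H i)) ∧
        (∀ i j : Fin n, i < j → ∀ a ∈ H i, ∀ b ∈ H j, a < b) ∧
        G n = Finset.univ.biUnion H) ∧
      (∀ n, 1 ≤ n → ∀ a ∈ F n, ∀ b ∈ G n, a < b) ∧
      (∀ n, 1 ≤ n → ∀ a ∈ G n, ∀ b ∈ F (n + 1), a < b) ∧
      (∀ n, 1 ≤ n → ∀ a ∈ F n ∪ G n, 1 ≤ a) ∧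
      (∀ m : ℕ, 1 ≤ m → ∃ n, 1 ≤ n ∧ m ∈ F n ∪ G n) ∧
      (∀ n, 2 ≤ n → (F n).card = ∑ m ∈ Finset.Ico 1 n, ((F m).card + (G m).card)) := by
  refine ⟨Fmpb, Gmpb, by simp [Fmpb], ?_, fun n hn => Gmpb_decomp n hn, ?_, ?_, ?_, ?_, ?_⟩
  · intro n hn
    constructor
    · rcases le_or_gt n 1 with h | h
      · exact ⟨1, 0, by rw [Fmpb, if_pos h]; exact (Finset.Icc_eq_empty (by omega)).symm⟩
      · exact ⟨_, _, Fmpb_eq n h⟩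
    · exact ⟨_, _, rfl⟩
  · intro n hn a ha b hb
    rcases le_or_gt n 1 with h | h
    · rw [Fmpb, if_pos h] at ha; simp at ha
    · rw [Fmpb_eq n h, Finset.mem_Icc] at ha
      rw [Gmpb, Finset.mem_Icc] at hb
      have := stMPB_pos n
      omega
  · intro n hn a ha b hb
    rw [Fmpb_eq (n+1) (by omega)] at hb
    simp only [Nat.add_sub_cancel] at hb
    rw [Finset.mem_Icc] at hb
    rw [Gmpb, Finset.mem_Icc] at ha
    have h1 : 1 ≤ 2^n * stMPB n :=
      Nat.one_le_iff_ne_zero.mpr (by have := stMPB_pos n; positivity)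
    omega
  · intro n hn a ha
    rw [Finset.mem_union] at ha
    rcases ha with ha | ha
    · rcases le_or_gt n 1 with h | h
      · rw [Fmpb, if_pos h] at ha; simp at ha
      · rw [Fmpb_eq n h, Finset.mem_Icc] at ha
        have h1 : 1 ≤ 2^(n-1) * stMPB (n-1) :=
          Nat.one_le_iff_ne_zero.mpr (by have := stMPB_pos (n-1); positivity)
        omega
    · rw [Gmpb, Finset.mem_Icc] at ha
      have := stMPB_pos n
      omega
  · intro m hm
    have h1 : m < 2^m := Nat.lt_two_pow_self (n := m)
    have h2 : 2^m ≤ 2^m * stMPB m := Nat.le_mul_of_pos_right _ (stMPB_pos m)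
    exact cover_aux m hm m hm (by omega)
  · intro n hn
    rw [card_Fmpb n hn, sum_card n hn]
end
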